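/- arXiv:2205.04825 — 3 statements merged into one kernel-verified Lean document; each statement's English description precedes it below -/
import Mathlib

section
/- Let G be a connected non-bipartite graph and n ≥ 4 an even integer. Then κ(G × C_n) = min{(n/2)·κ(G × K_2), 2·δ(G)}. -/
open SimpleGraph

universe u v

variable {α : Type u} {β : Type v}

/-- Direct (tensor) product of two simple graphs. -/
def SimpleGraph.tensorProd (G : SimpleGraph α) (H : SimpleGraph β) :
    SimpleGraph (α × β) where
  Adj x y := G.Adj x.1 y.1 ∧ H.Adj x.2 y.2
  symm := ⟨fun x y h => ⟨h.1.symm, h.2.symm⟩⟩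
  loopless := ⟨fun x h => G.loopless.irrefl x.1 h.1⟩

/-- Direct (tensor) product of a family of simple graphs. -/
def SimpleGraph.piTensorProd {ι : Type*} {V : ι → Type*}
    (G : ∀ i, SimpleGraph (V i)) : SimpleGraph (∀ i, V i) where
  Adj f g := f ≠ g ∧ ∀ i, (G i).Adj (f i) (g i)
  symm := ⟨fun f g h => ⟨h.1.symm, fun i => (h.2 i).symm⟩⟩
  loopless := ⟨fun f h => h.1 rfl⟩

/-- `S` is a vertex cut of `G`: deleting `S` leaves a disconnected graph. -/
def SimpleGraph.IsVertexCut (G : SimpleGraph α) (S : Set α) : Prop :=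
  ¬ (G.induce Sᶜ).Connected

/-- Vertex connectivity: minimum size of a set `S` such that `G - S` is
disconnected or has at most one vertex. -/
noncomputable def SimpleGraph.vConn (G : SimpleGraph α) : ℕ :=
  sInf {n | ∃ S : Set α, S.ncard = n ∧
    (G.IsVertexCut S ∨ Nat.card α ≤ n + 1)}

/-- Minimum degree (via neighbor set cardinalities). -/
noncomputable def SimpleGraph.minDeg (G : SimpleGraph α) : ℕ :=
  sInf {d | ∃ v, (G.neighborSet v).ncard = d}

/-- A minimum vertex cut. -/
def SimpleGraph.IsMinVertexCut (G : SimpleGraph α) (S : Set α) : Prop :=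
  G.IsVertexCut S ∧ S.ncard = G.vConn

/-- `G` is super connected: every minimum vertex cut is the neighborhood of a
vertex of minimum degree. -/
def SimpleGraph.SuperConnected (G : SimpleGraph α) : Prop :=
  ∀ S : Set α, G.IsMinVertexCut S →
    ∃ v, (G.neighborSet v).ncard = G.minDeg ∧ S = G.neighborSet v

/-- `(X, Y)` is a bipartition of `G`. -/
def SimpleGraph.IsBipartition (G : SimpleGraph α) (X Y : Set α) : Prop :=
  Disjoint X Y ∧ X ∪ Y = Set.univ ∧
    ∀ u v, G.Adj u v → (u ∈ X ∧ v ∈ Y) ∨ (u ∈ Y ∧ v ∈ X)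

/-- The graph `G̃ₙ`: vertex set `α × ZMod n`, with for each `i` a copy `Hᵢ`
of `G` on `(Xᵢ, Yᵢ)` and a copy `Hᵢ'` of `G` on `(Xᵢ₊₁, Yᵢ)`. -/
def tildeG (G : SimpleGraph α) (X Y : Set α) (n : ℕ) :
    SimpleGraph (α × ZMod n) where
  Adj a b := G.Adj a.1 b.1 ∧
    ((a.1 ∈ X ∧ b.1 ∈ Y ∧ (a.2 = b.2 ∨ a.2 = b.2 + 1)) ∨
     (a.1 ∈ Y ∧ b.1 ∈ X ∧ (b.2 = a.2 ∨ b.2 = a.2 + 1)))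
  symm := ⟨fun a b h => ⟨h.1.symm, by tauto⟩⟩
  loopless := ⟨fun a h => G.loopless.irrefl a.1 h.1⟩

section Part1

variable {γ : Type*}

lemma tensorProd_adj {δ' : Type*} (G : SimpleGraph γ) (C : SimpleGraph δ') (a b : γ × δ') :
    (G.tensorProd C).Adj a b ↔ G.Adj a.1 b.1 ∧ C.Adj a.2 b.2 := Iff.rfl

lemma aux_walk_stay (Γ : SimpleGraph γ) (A B : Set γ)
    (hU : ∀ x, x ∈ A ∨ x ∈ B) (hd : ∀ x, x ∈ A → x ∈ B → False)
    (hE : ∀ u w, u ∈ A → w ∈ B → ¬Γ.Adj u w) :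
    ∀ {a b : γ}, Γ.Walk a b → a ∈ A → b ∈ B → False := by
  intro a b w
  induction w with
  | nil => exact fun ha hb => hd _ ha hb
  | @cons u c b h p ih =>
      intro ha hb
      rcases hU c with hc | hc
      · exact ih hc hb
      · exact hE _ _ ha hc h

lemma aux_not_connected (Γ : SimpleGraph γ) (A B : Set γ)
    (hU : ∀ x, x ∈ A ∨ x ∈ B) (hd : ∀ x, x ∈ A → x ∈ B → False)
    (hE : ∀ u w, u ∈ A → w ∈ B → ¬Γ.Adj u w)
    {a b : γ} (ha : a ∈ A) (hb : b ∈ B) : ¬ Γ.Connected := by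
  intro hc
  exact (hc.preconnected a b).elim fun w => aux_walk_stay Γ A B hU hd hE w ha hb

lemma aux_cut_of_partition (Γ : SimpleGraph γ) (S A B : Set γ)
    (hU : A ∪ B = Sᶜ) (hd : Disjoint A B) (hA : A.Nonempty) (hB : B.Nonempty)
    (hE : ∀ a ∈ A, ∀ b ∈ B, ¬Γ.Adj a b) : Γ.IsVertexCut S := by
  have hAc : A ⊆ Sᶜ := hU ▸ Set.subset_union_left
  have hBc : B ⊆ Sᶜ := hU ▸ Set.subset_union_right
  obtain ⟨a, ha⟩ := hA
  obtain ⟨b, hb⟩ := hB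
  intro hc
  refine aux_not_connected (Γ.induce Sᶜ)
    (Subtype.val ⁻¹' A) (Subtype.val ⁻¹' B)
    (fun x => by
      have hx : ↑x ∈ A ∪ B := by rw [hU]; exact x.2
      exact hx)
    (fun x hx1 hx2 => Set.disjoint_left.mp hd hx1 hx2)
    (fun u w hu hw hadj => hE u.1 hu w.1 hw hadj)
    (a := ⟨a, hAc ha⟩) (b := ⟨b, hBc hb⟩) ha hb hc

lemma aux_partition_of_not_connected (Γ : SimpleGraph γ) (S : Set γ)
    (h : ¬ (Γ.induce Sᶜ).Connected) (hne : Sᶜ.Nonempty) :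
    ∃ A B : Set γ, A ∪ B = Sᶜ ∧ Disjoint A B ∧ A.Nonempty ∧ B.Nonempty ∧
      ∀ a ∈ A, ∀ b ∈ B, ¬Γ.Adj a b := by
  have hne' : Nonempty ↥Sᶜ := hne.to_subtype
  have hpre : ¬ (Γ.induce Sᶜ).Preconnected := fun hp => h ((connected_iff _).mpr ⟨hp, hne'⟩)
  rw [Preconnected] at hpre
  push_neg at hpre
  obtain ⟨x, y, hxy⟩ := hpre
  set A : Set γ := {z | ∃ hz : z ∈ Sᶜ, (Γ.induce Sᶜ).Reachable x ⟨z, hz⟩} with hA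
  have hAsub : A ⊆ Sᶜ := fun z hz => hz.1
  refine ⟨A, Sᶜ \ A, Set.union_diff_cancel' (le_refl A) hAsub, Set.disjoint_sdiff_right, ?_, ?_, ?_⟩
  · exact ⟨↑x, x.2, by rw [Subtype.coe_eta]⟩
  · refine ⟨↑y, y.2, fun hy => ?_⟩
    obtain ⟨hy', r⟩ := hy
    exact hxy (by rwa [show (⟨↑y, hy'⟩ : ↥Sᶜ) = y from Subtype.ext rfl] at r)
  · rintro a ⟨ha', ra⟩ b ⟨hb', hbA⟩ hadj
    have hadj' : (Γ.induce Sᶜ).Adj ⟨a, ha'⟩ ⟨b, hb'⟩ := hadj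
    exact hbA ⟨hb', ra.trans hadj'.reachable⟩

end Part1

section Part2

variable {γ : Type*}

/-- parity map -/
def par {nn : ℕ} (j : Fin nn) : Fin 2 := ⟨j.val % 2, Nat.mod_lt _ two_pos⟩

lemma aux_ncard_sum [Fintype γ] (nn : ℕ) (S : Set (γ × Fin nn)) :
    S.ncard = ∑ j : Fin nn, {v : γ | (v, j) ∈ S}.ncard := by
  classical
  rw [Set.ncard_eq_toFinset_card']
  rw [Finset.card_eq_sum_card_fiberwise (f := Prod.snd) (t := Finset.univ)
    (fun x _ => Finset.mem_univ _)]
  refine Finset.sum_congr rfl fun j _ => ?_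
  have himg : Finset.filter (fun a => Prod.snd a = j) S.toFinset
      = Finset.image (fun v => (v, j)) {v : γ | (v, j) ∈ S}.toFinset := by
    ext p
    simp only [Finset.mem_filter, Set.mem_toFinset, Finset.mem_image, Set.mem_setOf_eq]
    constructor
    · rintro ⟨hp, h2⟩
      have hpj : p = (p.1, j) := Prod.ext_iff.mpr ⟨rfl, h2⟩
      refine ⟨p.1, ?_, hpj.symm⟩
      rwa [← hpj]
    · rintro ⟨v, hv, rfl⟩
      exact ⟨hv, rfl⟩
  rw [himg, Finset.card_image_of_injective _ (fun a b hab => congrArg Prod.fst hab),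
    Set.ncard_eq_toFinset_card']

lemma aux_two_layers {nn : ℕ} (S : Set (γ × Fin nn)) (hSfin : S.Finite) {c₁ c₂ : Fin nn}
    (h : c₁ ≠ c₂) (N₁ N₂ : Set γ)
    (h₁ : ∀ v ∈ N₁, (v, c₁) ∈ S) (h₂ : ∀ v ∈ N₂, (v, c₂) ∈ S) :
    N₁.ncard + N₂.ncard ≤ S.ncard := by
  classical
  have hinj1 : Function.Injective (fun v : γ => (v, c₁)) := fun a b hab => congrArg Prod.fst hab
  have hinj2 : Function.Injective (fun v : γ => (v, c₂)) := fun a b hab => congrArg Prod.fst hab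
  have hsub : ((fun v : γ => (v, c₁)) '' N₁) ∪ ((fun v : γ => (v, c₂)) '' N₂) ⊆ S := by
    rintro p (⟨v, hv, rfl⟩ | ⟨v, hv, rfl⟩)
    · exact h₁ v hv
    · exact h₂ v hv
  have hdisj : Disjoint ((fun v : γ => (v, c₁)) '' N₁) ((fun v : γ => (v, c₂)) '' N₂) := by
    rw [Set.disjoint_left]
    rintro p ⟨v, hv, rfl⟩ ⟨w, hw, hweq⟩
    exact h (congrArg Prod.snd hweq).symm
  calc N₁.ncard + N₂.ncard
      = ((fun v : γ => (v, c₁)) '' N₁).ncard + ((fun v : γ => (v, c₂)) '' N₂).ncard := by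
        rw [Set.ncard_image_of_injective _ hinj1, Set.ncard_image_of_injective _ hinj2]
    _ = (((fun v : γ => (v, c₁)) '' N₁) ∪ ((fun v : γ => (v, c₂)) '' N₂)).ncard :=
        (Set.ncard_union_eq hdisj (hSfin.subset (hsub.trans' Set.subset_union_left))
          (hSfin.subset (hsub.trans' Set.subset_union_right))).symm
    _ ≤ S.ncard := Set.ncard_le_ncard hsub hSfin

lemma aux_lift_card (nn : ℕ) (hn2 : nn % 2 = 0) (T : Set (γ × Fin 2)) :
    {p : γ × Fin nn | (p.1, par p.2) ∈ T}.ncard = (nn / 2) * T.ncard := by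
  set S : Set (γ × Fin nn) := {p | (p.1, par p.2) ∈ T} with hS
  have e : ↥S ≃ ↥T × Fin (nn / 2) :=
    { toFun := fun x => (⟨(x.1.1, par x.1.2), x.2⟩, ⟨x.1.2.val / 2, by
        have := x.1.2.isLt; omega⟩),
      invFun := fun tr => ⟨(tr.1.1.1, ⟨2 * tr.2.val + tr.1.1.2.val, by
        have h1 := tr.2.isLt; have h2 := tr.1.1.2.isLt; omega⟩), by
        have hmem := tr.1.2
        have hpar : par (⟨2 * tr.2.val + tr.1.1.2.val, by
            have h1 := tr.2.isLt; have h2 := tr.1.1.2.isLt; omega⟩ : Fin nn) = tr.1.1.2 := by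
          apply Fin.ext
          have h2 := tr.1.1.2.isLt
          simp only [par]
          omega
        show (tr.1.1.1, par _) ∈ T
        rw [hpar]
        exact hmem⟩,
      left_inv := fun x => by
        apply Subtype.ext
        apply Prod.ext
        · rfl
        · apply Fin.ext
          show 2 * (x.1.2.val / 2) + (par x.1.2).val = x.1.2.val
          simp only [par]
          omega,
      right_inv := fun tr => by
        refine Prod.ext (Subtype.ext (Prod.ext rfl ?_)) (Fin.ext ?_)
        · apply Fin.ext
          show (2 * tr.2.val + tr.1.1.2.val) % 2 = tr.1.1.2.val
          have h2 := tr.1.1.2.isLt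
          omega
        · show (2 * tr.2.val + tr.1.1.2.val) / 2 = tr.2.val
          have h2 := tr.1.1.2.isLt
          omega }
  calc S.ncard = Nat.card ↥S := (Nat.card_coe_set_eq S).symm
    _ = Nat.card (↥T × Fin (nn / 2)) := Nat.card_congr e
    _ = Nat.card ↥T * (nn / 2) := by rw [Nat.card_prod]; simp
    _ = (nn / 2) * T.ncard := by rw [Nat.card_coe_set_eq, Nat.mul_comm]

lemma aux_cycle_par_ne (k : ℕ) (hk : k % 2 = 0) {u w : Fin (k + 4)}
    (h : (cycleGraph (k + 4)).Adj u w) : par u ≠ par w := by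
  rw [cycleGraph_adj'] at h
  have h1 : u = w + 1 ∨ w = u + 1 := by
    rcases h with h | h
    · left
      have h3 : u - w = 1 := Fin.ext (by rw [h]; rfl)
      rw [sub_eq_iff_eq_add] at h3
      exact h3.trans (add_comm 1 w)
    · right
      have h3 : w - u = 1 := Fin.ext (by rw [h]; rfl)
      rw [sub_eq_iff_eq_add] at h3
      exact h3.trans (add_comm 1 u)
  have key : ∀ a : Fin (k + 4), par (a + 1) ≠ par a := by
    intro a
    have hval : (a + 1).val = (a.val + 1) % (k + 4) := by
      rw [Fin.val_add]
      rfl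
    have hlt := a.isLt
    have hcase : (a.val + 1) % (k + 4) = if a.val + 1 = k + 4 then 0 else a.val + 1 := by
      split
      · next hh => rw [hh, Nat.mod_self]
      · next hh => exact Nat.mod_eq_of_lt (by omega)
    intro hpar
    have hpv : (a + 1).val % 2 = a.val % 2 := congrArg Fin.val hpar
    rw [hval, hcase] at hpv
    split at hpv <;> omega
  rcases h1 with h1 | h1
  · rw [h1]; exact key w
  · rw [h1]; exact (key u).symm

end Part2

section Part3

variable {γ : Type*}

lemma aux_caseI [Fintype γ] (G : SimpleGraph γ) (k : ℕ)
    (S A B : Set (γ × Fin (k + 4)))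
    (hU : A ∪ B = Sᶜ) (hd : Disjoint A B)
    (hE : ∀ a ∈ A, ∀ b ∈ B, ¬(G.tensorProd (cycleGraph (k + 4))).Adj a b)
    (j : Fin (k + 4))
    (hAj : ∃ p ∈ A, p.2 = j ∨ p.2 = j + 1)
    (hBj : ∃ p ∈ B, p.2 = j ∨ p.2 = j + 1) :
    (G.tensorProd (⊤ : SimpleGraph (Fin 2))).vConn
      ≤ {v : γ | (v, j) ∈ S}.ncard + {v : γ | (v, j + 1) ∈ S}.ncard := by
  classical
  set e : Fin 2 → Fin (k + 4) := fun ε => if ε = 0 then j else j + 1 with he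
  have he0 : e 0 = j := if_pos rfl
  have he1 : e 1 = j + 1 := if_neg (by decide)
  have hadj01 : (cycleGraph (k + 4)).Adj j (j + 1) := by
    rw [cycleGraph_adj']
    right
    rw [add_sub_cancel_left]
    rfl
  set T : Set (γ × Fin 2) := {p | (p.1, e p.2) ∈ S} with hT
  have hfin2 : ∀ ε ε' : Fin 2, ε ≠ ε' → (ε = 0 ∧ ε' = 1) ∨ (ε = 1 ∧ ε' = 0) := by decide
  have hcut : (G.tensorProd (⊤ : SimpleGraph (Fin 2))).IsVertexCut T := by
    refine aux_cut_of_partition _ T {p | (p.1, e p.2) ∈ A} {p | (p.1, e p.2) ∈ B} ?_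
      ?_ ?_ ?_ ?_
    · ext p
      simp only [Set.mem_union, Set.mem_setOf_eq, Set.mem_compl_iff]
      have hiff : ((p.1, e p.2) ∈ A ∨ (p.1, e p.2) ∈ B) ↔ (p.1, e p.2) ∉ S := by
        rw [← Set.mem_compl_iff, ← hU, Set.mem_union]
      exact hiff
    · rw [Set.disjoint_left]
      intro p hp hp'
      exact Set.disjoint_left.mp hd hp hp'
    · obtain ⟨p, hp, hc⟩ := hAj
      rcases hc with hc | hc
      · refine ⟨(p.1, 0), ?_⟩
        show (p.1, e 0) ∈ A
        have hx : (p.1, e 0) = p := Prod.ext_iff.mpr ⟨rfl, he0.trans hc.symm⟩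
        rw [hx]; exact hp
      · refine ⟨(p.1, 1), ?_⟩
        show (p.1, e 1) ∈ A
        have hx : (p.1, e 1) = p := Prod.ext_iff.mpr ⟨rfl, he1.trans hc.symm⟩
        rw [hx]; exact hp
    · obtain ⟨p, hp, hc⟩ := hBj
      rcases hc with hc | hc
      · refine ⟨(p.1, 0), ?_⟩
        show (p.1, e 0) ∈ B
        have hx : (p.1, e 0) = p := Prod.ext_iff.mpr ⟨rfl, he0.trans hc.symm⟩
        rw [hx]; exact hp
      · refine ⟨(p.1, 1), ?_⟩
        show (p.1, e 1) ∈ B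
        have hx : (p.1, e 1) = p := Prod.ext_iff.mpr ⟨rfl, he1.trans hc.symm⟩
        rw [hx]; exact hp
    · intro a ha b hb hab
      obtain ⟨hG, hne⟩ := hab
      have hne' : a.2 ≠ b.2 := hne.ne
      rcases hfin2 _ _ hne' with ⟨h1, h2⟩ | ⟨h1, h2⟩
      · refine hE (a.1, e a.2) ha (b.1, e b.2) hb ⟨hG, ?_⟩
        rw [h1, h2, he0, he1]
        exact hadj01
      · refine hE (a.1, e a.2) ha (b.1, e b.2) hb ⟨hG, ?_⟩
        rw [h1, h2, he0, he1]
        exact hadj01.symm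
  have hmem : T.ncard ∈ {m | ∃ S' : Set (γ × Fin 2), S'.ncard = m ∧
      ((G.tensorProd (⊤ : SimpleGraph (Fin 2))).IsVertexCut S' ∨
        Nat.card (γ × Fin 2) ≤ m + 1)} := ⟨T, rfl, Or.inl hcut⟩
  have hle : (G.tensorProd (⊤ : SimpleGraph (Fin 2))).vConn ≤ T.ncard := Nat.sInf_le hmem
  have h0 : {v : γ | (v, (0 : Fin 2)) ∈ T} = {v : γ | (v, j) ∈ S} := by
    ext v
    show (v, e 0) ∈ S ↔ _
    rw [he0]
    rfl
  have h1 : {v : γ | (v, (1 : Fin 2)) ∈ T} = {v : γ | (v, j + 1) ∈ S} := by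
    ext v
    show (v, e 1) ∈ S ↔ _
    rw [he1]
    rfl
  have hcard : T.ncard = {v : γ | (v, j) ∈ S}.ncard + {v : γ | (v, j + 1) ∈ S}.ncard := by
    rw [aux_ncard_sum 2 T, Fin.sum_univ_two, h0, h1]
  rwa [hcard] at hle

open Fin.NatCast in
lemma aux_caseII [Fintype γ] (G : SimpleGraph γ) (k : ℕ)
    (S A B : Set (γ × Fin (k + 4)))
    (hU : A ∪ B = Sᶜ) (hd : Disjoint A B) (hA : A.Nonempty)
    (hE : ∀ a ∈ A, ∀ b ∈ B, ¬(G.tensorProd (cycleGraph (k + 4))).Adj a b)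
    (i : Fin (k + 4))
    (hmiss : ∀ p ∈ A, p.2 ≠ i ∧ p.2 ≠ i + 1) :
    2 * G.minDeg ≤ S.ncard := by
  classical
  set supp : Set (Fin (k + 4)) := {j | ∃ v, (v, j) ∈ A} with hsupp
  obtain ⟨⟨v₀, s₀⟩, hv₀⟩ := hA
  have hs₀ : s₀ ∈ supp := ⟨v₀, hv₀⟩
  have hi : i ∉ supp := fun ⟨v, hv⟩ => (hmiss _ hv).1 rfl
  have hi1 : i + 1 ∉ supp := fun ⟨v, hv⟩ => (hmiss _ hv).2 rfl
  -- forward search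
  have hwit1 : (s₀ + (((i - s₀).val : ℕ) : Fin (k + 4))) ∉ supp := by
    have hh : s₀ + (((i - s₀).val : ℕ) : Fin (k + 4)) = i := by
      rw [Fin.cast_val_eq_self]
      rw [add_comm s₀ (i - s₀), sub_add_cancel]
    rw [hh]
    exact hi
  have hex1 : ∃ d : ℕ, (s₀ + ((d : ℕ) : Fin (k + 4))) ∉ supp := ⟨_, hwit1⟩
  set d₁ := Nat.find hex1 with hd₁def
  have hd₁P : (s₀ + ((d₁ : ℕ) : Fin (k + 4))) ∉ supp := Nat.find_spec hex1
  have hmin₁ : ∀ d : ℕ, d < d₁ → (s₀ + ((d : ℕ) : Fin (k + 4))) ∈ supp :=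
    fun d hd => not_not.mp (Nat.find_min hex1 hd)
  have hd₁pos : 0 < d₁ := by
    rcases Nat.eq_zero_or_pos d₁ with h | h
    · exfalso
      apply hd₁P
      rw [h]
      simpa using hs₀
    · exact h
  have hd₁lt : d₁ < k + 4 := lt_of_le_of_lt (Nat.find_min' hex1 hwit1) (Fin.isLt (i - s₀))
  -- backward search
  have hwit2 : (s₀ - (((s₀ - i).val : ℕ) : Fin (k + 4))) ∉ supp := by
    have hh : s₀ - (((s₀ - i).val : ℕ) : Fin (k + 4)) = i := by
      rw [Fin.cast_val_eq_self, sub_sub_cancel]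
    rw [hh]
    exact hi
  have hex2 : ∃ d : ℕ, (s₀ - ((d : ℕ) : Fin (k + 4))) ∉ supp := ⟨_, hwit2⟩
  set d₂ := Nat.find hex2 with hd₂def
  have hd₂P : (s₀ - ((d₂ : ℕ) : Fin (k + 4))) ∉ supp := Nat.find_spec hex2
  have hmin₂ : ∀ d : ℕ, d < d₂ → (s₀ - ((d : ℕ) : Fin (k + 4))) ∈ supp :=
    fun d hd => not_not.mp (Nat.find_min hex2 hd)
  have hd₂pos : 0 < d₂ := by
    rcases Nat.eq_zero_or_pos d₂ with h | h
    · exfalso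
      apply hd₂P
      rw [h]
      simpa using hs₀
    · exact h
  have hd₂lt : d₂ < k + 4 := lt_of_le_of_lt (Nat.find_min' hex2 hwit2) (Fin.isLt (s₀ - i))
  set c₁ : Fin (k + 4) := s₀ + ((d₁ : ℕ) : Fin (k + 4)) with hc₁
  set c₂ : Fin (k + 4) := s₀ - ((d₂ : ℕ) : Fin (k + 4)) with hc₂
  set j₁ : Fin (k + 4) := s₀ + (((d₁ - 1 : ℕ) : ℕ) : Fin (k + 4)) with hj₁
  set j₂ : Fin (k + 4) := s₀ - (((d₂ - 1 : ℕ) : ℕ) : Fin (k + 4)) with hj₂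
  have hcast₁ : ((d₁ : ℕ) : Fin (k + 4)) = (((d₁ - 1 : ℕ) : ℕ) : Fin (k + 4)) + 1 := by
    conv_lhs => rw [show d₁ = (d₁ - 1) + 1 by omega]
    rw [Nat.cast_add, Nat.cast_one]
  have hcast₂ : ((d₂ : ℕ) : Fin (k + 4)) = (((d₂ - 1 : ℕ) : ℕ) : Fin (k + 4)) + 1 := by
    conv_lhs => rw [show d₂ = (d₂ - 1) + 1 by omega]
    rw [Nat.cast_add, Nat.cast_one]
  have hc₁j : c₁ = j₁ + 1 := by rw [hc₁, hcast₁, hj₁, add_assoc s₀ _ 1]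
  have hc₂j : c₂ = j₂ - 1 := by rw [hc₂, hcast₂, hj₂, sub_add_eq_sub_sub]
  have hj₁supp : j₁ ∈ supp := hmin₁ (d₁ - 1) (by omega)
  have hj₂supp : j₂ ∈ supp := hmin₂ (d₂ - 1) (by omega)
  have hadj₁ : (cycleGraph (k + 4)).Adj j₁ c₁ := by
    rw [cycleGraph_adj']
    right
    rw [hc₁j, add_sub_cancel_left]
    rfl
  have hadj₂ : (cycleGraph (k + 4)).Adj j₂ c₂ := by
    rw [cycleGraph_adj']
    left
    rw [hc₂j, sub_sub_cancel]
    rfl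
  -- the two charged layers are distinct
  have hcc : c₁ ≠ c₂ := by
    intro hceq
    have h0 : ((d₁ : ℕ) : Fin (k + 4)) = -((d₂ : ℕ) : Fin (k + 4)) := by
      have h0' := hceq
      rw [hc₁, hc₂, sub_eq_add_neg] at h0'
      exact add_left_cancel h0'
    have hsum0 : (((d₁ + d₂ : ℕ)) : Fin (k + 4)) = 0 := by
      rw [Nat.cast_add, h0, neg_add_cancel]
    have hdvd : (k + 4) ∣ (d₁ + d₂) := by
      have hval := congrArg Fin.val hsum0
      rw [Fin.val_natCast] at hval
      exact Nat.dvd_of_mod_eq_zero hval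
    obtain ⟨t, ht⟩ := hdvd
    have hteq : d₁ + d₂ = k + 4 := by
      rcases Nat.lt_or_ge t 2 with h | h
      · interval_cases t <;> omega
      · exfalso; nlinarith
    -- now supp contains everything except c₁
    have claim : ∀ r : Fin (k + 4), r ≠ c₁ → r ∈ supp := by
      intro r hr
      set d := (r - s₀).val with hdd
      have hrd : r = s₀ + ((d : ℕ) : Fin (k + 4)) := by
        rw [Fin.cast_val_eq_self, add_comm s₀ (r - s₀), sub_add_cancel]
      have hdlt : d < k + 4 := Fin.isLt _
      rcases lt_trichotomy d d₁ with h | h | h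
      · rw [hrd]; exact hmin₁ d h
      · exact absurd (by rw [hrd, h, hc₁] : r = c₁) hr
      · have hcast : ((d : ℕ) : Fin (k + 4)) = -(((k + 4 - d : ℕ) : ℕ) : Fin (k + 4)) := by
          apply eq_neg_of_add_eq_zero_left
          rw [← Nat.cast_add, show d + (k + 4 - d) = k + 4 by omega, Fin.natCast_self]
        have hrd' : r = s₀ - (((k + 4 - d : ℕ) : ℕ) : Fin (k + 4)) := by
          rw [hrd, hcast, ← sub_eq_add_neg]
        rw [hrd']
        exact hmin₂ (k + 4 - d) (by omega)
    have h5 : i = c₁ := by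
      by_contra hne
      exact hi (claim i hne)
    have h6 : i + 1 = c₁ := by
      by_contra hne
      exact hi1 (claim (i + 1) hne)
    have h7 : i = i + 1 := h5.trans h6.symm
    have h8 : (1 : Fin (k + 4)) = 0 := left_eq_add.mp h7
    exact absurd (congrArg Fin.val h8) (by simp)
  -- charging
  have charge : ∀ (c : Fin (k + 4)) (v : γ) (jj : Fin (k + 4)),
      (v, jj) ∈ A → (cycleGraph (k + 4)).Adj jj c → c ∉ supp →
      ∀ w ∈ G.neighborSet v, (w, c) ∈ S := by
    intro c v jj hvA hadj hc w hw
    by_contra hwS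
    have hmemc : (w, c) ∈ A ∪ B := by rw [hU]; exact hwS
    rcases hmemc with hmem | hmem
    · exact hc ⟨w, hmem⟩
    · exact hE (v, jj) hvA (w, c) hmem ⟨hw, hadj⟩
  obtain ⟨v, hv⟩ := hj₁supp
  obtain ⟨w, hw⟩ := hj₂supp
  have hδ₁ : G.minDeg ≤ (G.neighborSet v).ncard := Nat.sInf_le ⟨v, rfl⟩
  have hδ₂ : G.minDeg ≤ (G.neighborSet w).ncard := Nat.sInf_le ⟨w, rfl⟩
  have hkey := aux_two_layers S (Set.toFinite S) hcc (G.neighborSet v) (G.neighborSet w)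
    (fun x hx => charge c₁ v j₁ hv hadj₁ hd₁P x hx)
    (fun x hx => charge c₂ w j₂ hw hadj₂ hd₂P x hx)
  omega

end Part3

section Part4

variable {γ : Type*}

lemma aux_upper_deg [Fintype γ] [Nonempty γ] (G : SimpleGraph γ) (k : ℕ) :
    ∃ S : Set (γ × Fin (k + 4)), S.ncard = 2 * G.minDeg ∧
      (G.tensorProd (cycleGraph (k + 4))).IsVertexCut S := by
  classical
  have hdne : {d | ∃ v, (G.neighborSet v).ncard = d}.Nonempty :=
    ⟨(G.neighborSet (Classical.arbitrary γ)).ncard, Classical.arbitrary γ, rfl⟩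
  obtain ⟨v₀, hv₀⟩ := Nat.sInf_mem hdne
  set N := G.neighborSet v₀ with hN
  have hv1 : (1 : Fin (k + 4)).val = 1 := rfl
  have h2val : ((1 : Fin (k + 4)) + 1).val = 2 := by
    rw [Fin.val_add, hv1]
    exact Nat.mod_eq_of_lt (by omega)
  have h3val : ((1 : Fin (k + 4)) + 1 + 1).val = 3 := by
    rw [Fin.val_add, h2val, hv1]
    exact Nat.mod_eq_of_lt (by omega)
  have hne1 : (1 : Fin (k + 4)) ≠ -1 := by
    intro h
    have h' : (1 : Fin (k + 4)) + 1 = -1 + 1 := congrArg (· + 1) h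
    rw [neg_add_cancel] at h'
    have := congrArg Fin.val h'
    rw [h2val] at this
    simp at this
  set S : Set (γ × Fin (k + 4)) :=
    ((fun w => (w, (1 : Fin (k + 4)))) '' N) ∪ ((fun w => (w, (-1 : Fin (k + 4)))) '' N) with hS
  have hmemS : ∀ w c, (w, c) ∈ S ↔ w ∈ N ∧ (c = 1 ∨ c = -1) := by
    intro w c
    constructor
    · rintro (⟨x, hx, hxe⟩ | ⟨x, hx, hxe⟩)
      · obtain ⟨h1, h2⟩ := Prod.ext_iff.mp hxe
        have hxw : x = w := h1
        exact ⟨hxw ▸ hx, Or.inl h2.symm⟩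
      · obtain ⟨h1, h2⟩ := Prod.ext_iff.mp hxe
        have hxw : x = w := h1
        exact ⟨hxw ▸ hx, Or.inr h2.symm⟩
    · rintro ⟨hw, (rfl | rfl)⟩
      · exact Or.inl ⟨w, hw, rfl⟩
      · exact Or.inr ⟨w, hw, rfl⟩
  have hScard : S.ncard = 2 * G.minDeg := by
    have hdisj : Disjoint ((fun w => (w, (1 : Fin (k + 4)))) '' N)
        ((fun w => (w, (-1 : Fin (k + 4)))) '' N) := by
      rw [Set.disjoint_left]
      rintro p ⟨x, hx, rfl⟩ ⟨y, hy, hye⟩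
      exact hne1 (Prod.ext_iff.mp hye).2.symm
    rw [hS, Set.ncard_union_eq hdisj (Set.toFinite _) (Set.toFinite _),
      Set.ncard_image_of_injective _ (fun a b hab => (Prod.ext_iff.mp hab).1),
      Set.ncard_image_of_injective _ (fun a b hab => (Prod.ext_iff.mp hab).1)]
    have hNδ : N.ncard = G.minDeg := hv₀
    omega
  have hA0 : ((v₀, (0 : Fin (k + 4))) : γ × Fin (k + 4)) ∈ Sᶜ := by
    intro hmem
    rcases (hmemS _ _).mp hmem with ⟨_, h | h⟩
    · exact absurd (congrArg Fin.val h) (by simp)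
    · exact absurd (congrArg Fin.val (neg_eq_zero.mp h.symm)) (by simp)
  have hB0 : ((v₀, (1 : Fin (k + 4)) + 1) : γ × Fin (k + 4)) ∈ Sᶜ := by
    intro hmem
    rcases (hmemS _ _).mp hmem with ⟨_, h | h⟩
    · have := congrArg Fin.val h
      rw [h2val, hv1] at this
      omega
    · have h' : (1 : Fin (k + 4)) + 1 + 1 = -1 + 1 := congrArg (· + 1) h
      rw [neg_add_cancel] at h'
      have := congrArg Fin.val h'
      rw [h3val] at this
      simp at this
  refine ⟨S, hScard, ?_⟩
  refine aux_cut_of_partition _ S {((v₀, (0 : Fin (k + 4))) : γ × Fin (k + 4))}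
    (Sᶜ \ {((v₀, (0 : Fin (k + 4))) : γ × Fin (k + 4))}) ?_ Set.disjoint_sdiff_right
    ⟨_, rfl⟩ ?_ ?_
  · exact Set.union_diff_cancel' (le_refl _) (Set.singleton_subset_iff.mpr hA0)
  · refine ⟨(v₀, (1 : Fin (k + 4)) + 1), hB0, ?_⟩
    intro hmem
    have h := (Prod.ext_iff.mp (Set.mem_singleton_iff.mp hmem)).2
    have h2 := congrArg Fin.val h
    rw [h2val] at h2
    simp at h2
  · rintro a ha b ⟨hbc, _⟩ hadj
    rw [Set.mem_singleton_iff] at ha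
    subst ha
    obtain ⟨hGadj, hcyc⟩ := hadj
    rw [cycleGraph_adj'] at hcyc
    apply hbc
    have hw : b.1 ∈ N := hGadj
    refine (hmemS b.1 b.2).mpr ⟨hw, ?_⟩
    rcases hcyc with h | h
    · right
      have h01 : (0 : Fin (k + 4)) - b.2 = 1 := Fin.ext h
      have hneg : -b.2 = 1 := by rwa [zero_sub] at h01
      exact neg_eq_iff_eq_neg.mp hneg
    · left
      rw [sub_zero] at h
      exact Fin.ext h

lemma aux_upper_lift [Fintype γ] [Nonempty γ] (G : SimpleGraph γ) (k : ℕ)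
    (hk : (k + 4) % 2 = 0)
    (hlt : ((k + 4) / 2) * (G.tensorProd (⊤ : SimpleGraph (Fin 2))).vConn < 2 * G.minDeg) :
    (G.tensorProd (cycleGraph (k + 4))).vConn
      ≤ ((k + 4) / 2) * (G.tensorProd (⊤ : SimpleGraph (Fin 2))).vConn := by
  classical
  set κ := (G.tensorProd (⊤ : SimpleGraph (Fin 2))).vConn with hκ
  -- minDeg < card γ
  have hcardpos : 0 < Fintype.card γ := Fintype.card_pos
  have hδlt : G.minDeg < Fintype.card γ := by
    have h1 : G.minDeg ≤ (G.neighborSet (Classical.arbitrary γ)).ncard :=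
      Nat.sInf_le ⟨Classical.arbitrary γ, rfl⟩
    have h2 : (G.neighborSet (Classical.arbitrary γ)).ncard < Fintype.card γ := by
      have hss : G.neighborSet (Classical.arbitrary γ) ⊂ Set.univ := by
        rw [Set.ssubset_univ_iff]
        intro hu
        have : Classical.arbitrary γ ∈ G.neighborSet (Classical.arbitrary γ) := by
          rw [hu]; trivial
        exact G.loopless.irrefl _ this
      have := Set.ncard_lt_ncard hss (Set.finite_univ)
      rwa [Set.ncard_univ, Nat.card_eq_fintype_card] at this
    omega
  have hm2 : 2 ≤ (k + 4) / 2 := by omega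
  have h2κ : 2 * κ ≤ (k + 4) / 2 * κ := Nat.mul_le_mul_right κ hm2
  have h2κδ : 2 * κ < 2 * G.minDeg := lt_of_le_of_lt h2κ hlt
  have hκlt : κ < G.minDeg := by omega
  -- get a genuine minimum cut of G × K2
  have hKne : {q | ∃ T : Set (γ × Fin 2), T.ncard = q ∧
      ((G.tensorProd (⊤ : SimpleGraph (Fin 2))).IsVertexCut T ∨
        Nat.card (γ × Fin 2) ≤ q + 1)}.Nonempty := by
    refine ⟨(Set.univ : Set (γ × Fin 2)).ncard, Set.univ, rfl, Or.inr ?_⟩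
    rw [Set.ncard_univ]
    omega
  obtain ⟨T, hTcard', hTor'⟩ := Nat.sInf_mem hKne
  have hTcard : T.ncard = κ := hTcard'
  have hTor : (G.tensorProd (⊤ : SimpleGraph (Fin 2))).IsVertexCut T ∨
      Nat.card (γ × Fin 2) ≤ κ + 1 := hTor'
  have hcard2 : Nat.card (γ × Fin 2) = 2 * Fintype.card γ := by
    rw [Nat.card_prod, Nat.card_eq_fintype_card, Nat.card_eq_fintype_card, Fintype.card_fin]
    ring
  have hTcut : (G.tensorProd (⊤ : SimpleGraph (Fin 2))).IsVertexCut T := by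
    rcases hTor with h | h
    · exact h
    · exfalso
      rw [hcard2] at h
      omega
  -- lift the cut
  set S : Set (γ × Fin (k + 4)) := {p | (p.1, par p.2) ∈ T} with hSdef
  have hScard : S.ncard = ((k + 4) / 2) * κ := by
    rw [hSdef, aux_lift_card (k + 4) hk T, hTcard]
  have hTcne : Tᶜ.Nonempty := by
    rw [Set.nonempty_iff_ne_empty]
    intro hemp
    have : T = Set.univ := by
      rw [← Set.compl_empty, ← hemp, compl_compl]
    rw [this, Set.ncard_univ, hcard2] at hTcard
    omega
  have hScut : (G.tensorProd (cycleGraph (k + 4))).IsVertexCut S := by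
    intro hconn
    have hTne' : Nonempty ↥Tᶜ := hTcne.to_subtype
    have hpre : ¬ ((G.tensorProd (⊤ : SimpleGraph (Fin 2))).induce Tᶜ).Preconnected :=
      fun hp => hTcut ((connected_iff _).mpr ⟨hp, hTne'⟩)
    rw [Preconnected] at hpre
    push_neg at hpre
    obtain ⟨x, y, hxy⟩ := hpre
    set up : Fin 2 → Fin (k + 4) := fun ε => ⟨ε.val, by have := ε.isLt; omega⟩ with hup
    have hparup : ∀ ε : Fin 2, par (up ε) = ε := by
      intro ε
      apply Fin.ext
      show ε.val % 2 = ε.val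
      exact Nat.mod_eq_of_lt ε.isLt
    have hliftmem : ∀ z : ↥Tᶜ, ((z.1.1, up z.1.2) : γ × Fin (k + 4)) ∈ Sᶜ := by
      intro z
      show ¬ ((z.1.1, par (up z.1.2)) ∈ T)
      rw [hparup]
      exact z.2
    have hk2 : k % 2 = 0 := by omega
    set φ : (G.tensorProd (cycleGraph (k + 4))).induce Sᶜ →g
        (G.tensorProd (⊤ : SimpleGraph (Fin 2))).induce Tᶜ :=
      ⟨fun z => ⟨(z.1.1, par z.1.2), z.2⟩, by
        intro z w hzw
        obtain ⟨hG, hcyc⟩ := hzw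
        exact ⟨hG, top_adj _ _ |>.mpr (aux_cycle_par_ne k hk2 hcyc)⟩⟩ with hφ
    have hreach := (hconn.preconnected ⟨(x.1.1, up x.1.2), hliftmem x⟩
      ⟨(y.1.1, up y.1.2), hliftmem y⟩).map φ
    have hφx : φ ⟨(x.1.1, up x.1.2), hliftmem x⟩ = x := by
      apply Subtype.ext
      show ((x.1.1, par (up x.1.2)) : γ × Fin 2) = x.1
      rw [hparup]
    have hφy : φ ⟨(y.1.1, up y.1.2), hliftmem y⟩ = y := by
      apply Subtype.ext
      show ((y.1.1, par (up y.1.2)) : γ × Fin 2) = y.1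
      rw [hparup]
    rw [hφx, hφy] at hreach
    exact hxy hreach
  have hmem : S.ncard ∈ {q | ∃ S' : Set (γ × Fin (k + 4)), S'.ncard = q ∧
      ((G.tensorProd (cycleGraph (k + 4))).IsVertexCut S' ∨
        Nat.card (γ × Fin (k + 4)) ≤ q + 1)} := ⟨S, rfl, Or.inl hScut⟩
  have := Nat.sInf_le hmem
  rwa [hScard] at this

end Part4

/-- For a connected non-bipartite graph G and even n ≥ 4,
κ(G × Cₙ) = min{(n/2)·κ(G × K₂), 2·δ(G)}. -/
theorem stmt_9 (G : SimpleGraph α) (hGc : G.Connected) (hGb : ¬ G.Colorable 2)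
    (n : ℕ) (hn : 4 ≤ n) (heven : Even n) :
    (G.tensorProd (cycleGraph n)).vConn =
      min ((n / 2) * (G.tensorProd (⊤ : SimpleGraph (Fin 2))).vConn)
        (2 * G.minDeg) := by
  classical
  obtain ⟨k, rfl⟩ : ∃ k, n = k + 4 := ⟨n - 4, by omega⟩
  have hk2 : (k + 4) % 2 = 0 := Nat.even_iff.mp heven
  have hαne : Nonempty α := hGc.nonempty
  cases finite_or_infinite α with
  | inr hinf =>
      have hH0 : (G.tensorProd (cycleGraph (k + 4))).vConn = 0 := by
        apply Nat.sInf_eq_zero.mpr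
        left
        refine ⟨∅, Set.ncard_empty _, Or.inr ?_⟩
        have hi1 : Infinite (α × Fin (k + 4)) := by infer_instance
        rw [Nat.card_eq_zero_of_infinite]
        omega
      have hK0 : (G.tensorProd (⊤ : SimpleGraph (Fin 2))).vConn = 0 := by
        apply Nat.sInf_eq_zero.mpr
        left
        refine ⟨∅, Set.ncard_empty _, Or.inr ?_⟩
        have hi1 : Infinite (α × Fin 2) := by infer_instance
        rw [Nat.card_eq_zero_of_infinite]
        omega
      rw [hH0, hK0, Nat.mul_zero]
      simp
  | inl hfin =>
      have hft := Fintype.ofFinite α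
      -- upper bound via the 2δ cut
      obtain ⟨S₀, hS₀card, hS₀cut⟩ := aux_upper_deg G k
      have hmem₀ : 2 * G.minDeg ∈ {q | ∃ S : Set (α × Fin (k + 4)), S.ncard = q ∧
          ((G.tensorProd (cycleGraph (k + 4))).IsVertexCut S ∨
            Nat.card (α × Fin (k + 4)) ≤ q + 1)} := ⟨S₀, hS₀card, Or.inl hS₀cut⟩
      have hub1 : (G.tensorProd (cycleGraph (k + 4))).vConn ≤ 2 * G.minDeg :=
        Nat.sInf_le hmem₀
      -- minDeg < card α
      have hδlt : G.minDeg < Fintype.card α := by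
        have h1 : G.minDeg ≤ (G.neighborSet (Classical.arbitrary α)).ncard :=
          Nat.sInf_le ⟨Classical.arbitrary α, rfl⟩
        have h2 : (G.neighborSet (Classical.arbitrary α)).ncard < Fintype.card α := by
          have hss : G.neighborSet (Classical.arbitrary α) ⊂ Set.univ := by
            rw [Set.ssubset_univ_iff]
            intro hu
            have hmm : Classical.arbitrary α ∈ G.neighborSet (Classical.arbitrary α) := by
              rw [hu]; trivial
            exact G.loopless.irrefl _ hmm
          have := Set.ncard_lt_ncard hss Set.finite_univ
          rwa [Set.ncard_univ, Nat.card_eq_fintype_card] at this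
        omega
      have hc3 : Fintype.card α * 2 ≤ Fintype.card α * (k + 4) :=
        Nat.mul_le_mul_left _ (by omega)
      have hcardprod : Nat.card (α × Fin (k + 4)) = Fintype.card α * (k + 4) := by
        rw [Nat.card_prod, Nat.card_eq_fintype_card, Nat.card_eq_fintype_card, Fintype.card_fin]
      -- lower bound
      have hlow : ∀ t ∈ {q | ∃ S : Set (α × Fin (k + 4)), S.ncard = q ∧
          ((G.tensorProd (cycleGraph (k + 4))).IsVertexCut S ∨
            Nat.card (α × Fin (k + 4)) ≤ q + 1)},
          min ((k + 4) / 2 * (G.tensorProd (⊤ : SimpleGraph (Fin 2))).vConn)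
            (2 * G.minDeg) ≤ t := by
        rintro t ⟨S, rfl, hor⟩
        have hbig2δ : ∀ t' : ℕ, Fintype.card α * (k + 4) ≤ t' + 1 → 2 * G.minDeg ≤ t' := by
          intro t' ht'
          have hlt1 : 2 * G.minDeg < Fintype.card α * 2 := by omega
          have : 2 * G.minDeg < t' + 1 :=
            lt_of_lt_of_le (lt_of_lt_of_le hlt1 hc3) ht'
          omega
        rcases hor with hcut | hbig
        · by_cases hSc : Sᶜ = ∅
          · refine le_trans (min_le_right _ _) ?_
            have hSuniv : S = Set.univ := by
              rw [← compl_compl S, hSc, Set.compl_empty]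
            have hceq : S.ncard = Fintype.card α * (k + 4) := by
              rw [hSuniv, Set.ncard_univ, hcardprod]
            exact hbig2δ _ (by rw [hceq]; omega)
          · obtain ⟨A, B, hU, hd, hA, hB, hE⟩ := aux_partition_of_not_connected _ S hcut
              (Set.nonempty_iff_ne_empty.mpr hSc)
            by_cases hI : ∀ j : Fin (k + 4),
                (∃ p ∈ A, p.2 = j ∨ p.2 = j + 1) ∧ (∃ p ∈ B, p.2 = j ∨ p.2 = j + 1)
            · -- Case I : every copy of G × K₂ is cut
              refine le_trans (min_le_left _ _) ?_
              set κ := (G.tensorProd (⊤ : SimpleGraph (Fin 2))).vConn with hκ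
              have hperj : ∀ j : Fin (k + 4),
                  κ ≤ {v : α | (v, j) ∈ S}.ncard + {v : α | (v, j + 1) ∈ S}.ncard :=
                fun j => aux_caseI G k S A B hU hd hE j (hI j).1 (hI j).2
              have hsum1 : S.ncard = ∑ j : Fin (k + 4), {v : α | (v, j) ∈ S}.ncard :=
                aux_ncard_sum _ S
              have hsum2 : ∑ j : Fin (k + 4), {v : α | (v, j + 1) ∈ S}.ncard
                  = ∑ j : Fin (k + 4), {v : α | (v, j) ∈ S}.ncard :=
                Fintype.sum_equiv (Equiv.addRight (1 : Fin (k + 4))) _ _ (fun j => rfl)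
              have hbig : (k + 4) * κ ≤ 2 * S.ncard := by
                calc (k + 4) * κ = ∑ _j : Fin (k + 4), κ := by
                      rw [Finset.sum_const, Finset.card_univ, Fintype.card_fin, smul_eq_mul]
                  _ ≤ ∑ j : Fin (k + 4),
                        ({v : α | (v, j) ∈ S}.ncard + {v : α | (v, j + 1) ∈ S}.ncard) :=
                      Finset.sum_le_sum (fun j _ => hperj j)
                  _ = (∑ j : Fin (k + 4), {v : α | (v, j) ∈ S}.ncard)
                        + ∑ j : Fin (k + 4), {v : α | (v, j + 1) ∈ S}.ncard :=
                      Finset.sum_add_distrib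
                  _ = 2 * S.ncard := by
                      rw [hsum2, ← hsum1]
                      ring
              have h2m : k + 4 = 2 * ((k + 4) / 2) := by omega
              have hbig' : 2 * (((k + 4) / 2) * κ) ≤ 2 * S.ncard := by
                rw [← mul_assoc, ← h2m]
                exact hbig
              exact Nat.le_of_mul_le_mul_left hbig' (by norm_num)
            · -- Case II : some pair of consecutive layers is missed by A or B
              refine le_trans (min_le_right _ _) ?_
              push_neg at hI
              obtain ⟨j, hj⟩ := hI
              by_cases hAj : ∃ p ∈ A, p.2 = j ∨ p.2 = j + 1
              · have hmissB := hj hAj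
                exact aux_caseII G k S B A (by rw [Set.union_comm]; exact hU) hd.symm hB
                  (fun b hb a ha hadj => hE a ha b hb hadj.symm) j hmissB
              · push_neg at hAj
                exact aux_caseII G k S A B hU hd hA hE j hAj
        · refine le_trans (min_le_right _ _) ?_
          rw [hcardprod] at hbig
          exact hbig2δ _ hbig
      apply le_antisymm
      · rcases le_or_gt (2 * G.minDeg)
            ((k + 4) / 2 * (G.tensorProd (⊤ : SimpleGraph (Fin 2))).vConn) with hc | hc
        · rw [min_eq_right hc]
          exact hub1
        · rw [min_eq_left hc.le]
          exact aux_upper_lift G k hk2 hc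
      · exact le_csInf ⟨_, hmem₀⟩ hlow
end

section
/- Let G be a connected non-bipartite graph and n ≥ 6 an even integer. If κ(G × K_2) > (4/n)·δ(G), then G × C_n is super connected. -/
open SimpleGraph

universe u v

variable {α : Type u} {β : Type v}

theorem even_walk (G : SimpleGraph α) (hGc : G.Connected) (hGb : ¬ G.Colorable 2)
    (u w : α) : ∃ p : G.Walk u w, Even p.length := by
  classical
  have hodd : ∃ (x : α) (p : G.Walk x x), Odd p.length := by
    by_contra h
    push_neg at h
    obtain ⟨x₀⟩ := hGc.nonempty
    apply hGb
    refine ⟨Coloring.mk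
      (fun v => if ∃ p : G.Walk x₀ v, Even p.length then (0 : Fin 2) else 1) ?_⟩
    intro v v' hadj
    by_cases hv : ∃ p : G.Walk x₀ v, Even p.length <;>
      by_cases hv' : ∃ p : G.Walk x₀ v', Even p.length
    · exfalso
      obtain ⟨p, hp⟩ := hv
      obtain ⟨q, hq⟩ := hv'
      apply h x₀ (p.append ((Walk.cons hadj Walk.nil).append q.reverse))
      have hl : (p.append ((Walk.cons hadj Walk.nil).append q.reverse)).length
          = p.length + (1 + q.length) := by
          simp [Walk.length_append, Walk.length_reverse, Nat.add_comm]
      rw [Nat.odd_iff, hl]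
      rw [Nat.even_iff] at hp hq
      omega
    · simp [hv, hv']
    · simp [hv, hv']
    · exfalso
      obtain ⟨p⟩ := hGc.preconnected x₀ v
      rcases Nat.even_or_odd p.length with he | ho
      · exact hv ⟨p, he⟩
      · refine hv' ⟨p.concat hadj, ?_⟩
        rw [Walk.length_concat, Nat.even_add_one]
        exact Nat.not_even_iff_odd.2 ho
  obtain ⟨x, c, hc⟩ := hodd
  obtain ⟨p⟩ := hGc.preconnected u x
  obtain ⟨q⟩ := hGc.preconnected x w
  rcases Nat.even_or_odd (p.append q).length with he | ho
  · exact ⟨p.append q, he⟩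
  · refine ⟨p.append (c.append q), ?_⟩
    have h1 : (p.append q).length = p.length + q.length := Walk.length_append _ _
    have h2 : (p.append (c.append q)).length = p.length + (c.length + q.length) := by
      simp [Walk.length_append]
    rw [Nat.odd_iff] at ho hc
    rw [Nat.even_iff, h2]
    rw [h1] at ho
    omega

theorem vconn_le_of_cut (G : SimpleGraph α) (S : Set α) (h : G.IsVertexCut S) :
    G.vConn ≤ S.ncard := Nat.sInf_le ⟨S, rfl, Or.inl h⟩

open Fin.CommRing

/-- For a connected non-bipartite graph G and even n ≥ 6, if
κ(G × K₂) > (4/n)·δ(G), then G × Cₙ is super connected. -/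
theorem stmt_13 (G : SimpleGraph α) (hGc : G.Connected) (hGb : ¬ G.Colorable 2)
    (n : ℕ) (hn : 6 ≤ n) (heven : Even n)
    (hk : 4 * G.minDeg < n * (G.tensorProd (⊤ : SimpleGraph (Fin 2))).vConn) :
    (G.tensorProd (cycleGraph n)).SuperConnected := by
  classical
  obtain ⟨N, rfl⟩ : ∃ N, n = N + 2 := ⟨n - 2, by omega⟩
  set B := G.tensorProd (⊤ : SimpleGraph (Fin 2)) with hB
  set P := G.tensorProd (cycleGraph (N + 2)) with hP
  set δ := G.minDeg with hδ
  -- α is finite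
  have hfin : Finite α := by
    by_contra h
    rw [not_finite_iff_infinite] at h
    have h0 : (0:ℕ) ∈ {k | ∃ S : Set (α × Fin 2), S.ncard = k ∧
        (B.IsVertexCut S ∨ Nat.card (α × Fin 2) ≤ k + 1)} :=
      ⟨∅, by simp, Or.inr (by simp [Nat.card_eq_zero_of_infinite])⟩
    have h1 : B.vConn = 0 := Nat.le_zero.1 (Nat.sInf_le h0)
    rw [h1] at hk
    omega
  haveI : Fintype α := Fintype.ofFinite α
  haveI : Nonempty α := hGc.nonempty
  -- arithmetic facts about F = Fin (N+2)
  have hN : 4 ≤ N := by omega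
  have h1ne : (1 : Fin (N+2)) ≠ 0 := by
    simp [Fin.ext_iff]
  have h2ne : (2 : Fin (N+2)) ≠ 0 := by
    intro h
    have h3 : ((2:Fin (N+2))) = ((2:ℕ) : Fin (N+2)) := by norm_cast
    rw [h3, Fin.ext_iff, Fin.val_cast_of_lt (by omega)] at h
    simp at h
  -- adjacency in the cycle
  have hcyc : ∀ i j : Fin (N+2), (cycleGraph (N+2)).Adj i j ↔ (j = i + 1 ∨ i = j + 1) := by
    intro i j
    rw [cycleGraph_adj]
    constructor
    · rintro (h | h)
      · exact Or.inr (by rw [← h]; ring)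
      · exact Or.inl (by rw [← h]; ring)
    · rintro (h | h)
      · exact Or.inr (by rw [h]; ring)
      · exact Or.inl (by rw [h]; ring)
  have hPadj : ∀ p q : α × Fin (N+2), P.Adj p q ↔
      (G.Adj p.1 q.1 ∧ (q.2 = p.2 + 1 ∨ p.2 = q.2 + 1)) := by
    intro p q
    rw [hP]
    exact and_congr Iff.rfl (hcyc p.2 q.2)
  have hii1 : ∀ i : Fin (N+2), i ≠ i + 1 := by
    intro i h
    exact h1ne (by linear_combination -h)
  have hpm : ∀ i : Fin (N+2), i + 1 ≠ i - 1 := by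
    intro i h
    exact h2ne (by linear_combination h)
  -- an edge exists
  have hedge : ∃ a b, G.Adj a b := by
    by_contra h
    push_neg at h
    exact hGb ⟨Coloring.mk (fun _ => (0 : Fin 2)) (fun {a b} hab => absurd hab (h a b))⟩
  -- every vertex has a neighbor
  have hnbr : ∀ v : α, (G.neighborSet v).Nonempty := by
    intro v
    obtain ⟨y, hy⟩ : ∃ y : α, y ≠ v := by
      obtain ⟨a, b, hab⟩ := hedge
      by_cases hav : a = v
      · exact ⟨b, fun hb => G.irrefl (hb ▸ hav ▸ hab)⟩
      · exact ⟨a, hav⟩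
    obtain ⟨p⟩ := hGc.preconnected v y
    cases p with
    | nil => exact absurd rfl hy.symm
    | @cons _ c _ h q => exact ⟨c, h⟩
  have hδle : ∀ w, δ ≤ (G.neighborSet w).ncard := by
    intro w
    apply Nat.sInf_le
    exact ⟨w, rfl⟩
  obtain ⟨v₀, hv₀⟩ : ∃ v₀, (G.neighborSet v₀).ncard = δ := by
    have hne : {d | ∃ v, (G.neighborSet v).ncard = d}.Nonempty :=
      ⟨(G.neighborSet (Classical.arbitrary α)).ncard, ⟨Classical.arbitrary α, rfl⟩⟩
    exact Nat.sInf_mem hne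
  have hδpos : 1 ≤ δ := by
    rw [← hv₀]
    exact (Set.ncard_pos (Set.toFinite _)).2 (hnbr v₀)
  have hδm : δ + 1 ≤ Nat.card α := by
    have h1 : G.neighborSet v₀ ⊆ {v₀}ᶜ := by
      intro y hy
      simp only [Set.mem_compl_iff, Set.mem_singleton_iff]
      exact fun h => G.irrefl (h ▸ hy)
    have h2 := Set.ncard_le_ncard h1 (Set.toFinite _)
    have h3 : ({v₀}ᶜ : Set α).ncard + ({v₀} : Set α).ncard = Nat.card α := by
      rw [← Set.ncard_union_eq disjoint_compl_left (Set.toFinite _) (Set.toFinite _)]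
      rw [Set.compl_union_self, Set.ncard_univ]
    rw [Set.ncard_singleton] at h3
    omega
  have hκpos : 1 ≤ B.vConn := by
    rcases Nat.eq_zero_or_pos B.vConn with h | h
    · rw [h] at hk; omega
    · exact h
  -- neighborhoods in P
  have hPnbr : ∀ (w : α) (j : Fin (N+2)), P.neighborSet (w, j) =
      (fun y => (y, j+1)) '' G.neighborSet w ∪ (fun y => (y, j-1)) '' G.neighborSet w := by
    intro w j
    ext ⟨y, k⟩
    simp only [mem_neighborSet, hPadj, Set.mem_union, Set.mem_image]
    constructor
    · rintro ⟨hadj, hk | hk⟩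
      · exact Or.inl ⟨y, hadj, by rw [hk]⟩
      · exact Or.inr ⟨y, hadj, by rw [show k = j - 1 by linear_combination -hk]⟩
    · rintro (⟨z, hz, he⟩ | ⟨z, hz, he⟩) <;>
        (cases he; exact ⟨hz, by first | exact Or.inl rfl | exact Or.inr (by ring)⟩)
  have hPdeg : ∀ (w : α) (j : Fin (N+2)), (P.neighborSet (w,j)).ncard
      = 2 * (G.neighborSet w).ncard := by
    intro w j
    have hinj : ∀ c : Fin (N+2), Function.Injective (fun y : α => (y, c)) := by
      intro c a b h
      exact congrArg Prod.fst h
    rw [hPnbr, Set.ncard_union_eq ?_ (Set.toFinite _) (Set.toFinite _),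
      Set.ncard_image_of_injective _ (hinj (j+1)), Set.ncard_image_of_injective _ (hinj (j-1))]
    · ring
    · rw [Set.disjoint_left]
      rintro ⟨y, k⟩ ⟨z, hz, he⟩ ⟨z', hz', he'⟩
      cases he
      exact hpm j (congrArg Prod.snd he').symm
  have hPmin : P.minDeg = 2 * δ := by
    apply le_antisymm
    · exact Nat.sInf_le ⟨(v₀, 0), by rw [hPdeg, hv₀]⟩
    · have hne2 : {d | ∃ p : α × Fin (N+2), (P.neighborSet p).ncard = d}.Nonempty :=
        ⟨_, ⟨(v₀, (0 : Fin (N+2))), rfl⟩⟩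
      apply le_csInf hne2
      rintro d ⟨⟨w, j⟩, rfl⟩
      rw [hPdeg]
      exact Nat.mul_le_mul_left 2 (hδle w)
  have hcardP : Nat.card (α × Fin (N+2)) = Nat.card α * (N+2) := by
    rw [Nat.card_prod, Nat.card_eq_fintype_card (α := Fin (N+2)), Fintype.card_fin]
  -- vConn P ≤ 2δ
  have hPcut : P.IsVertexCut (P.neighborSet (v₀, 0)) := by
    intro hconn
    have hnb : (P.neighborSet (v₀, (0:Fin (N+2)))).ncard = 2*δ := by rw [hPdeg, hv₀]
    obtain ⟨b, hb⟩ : ∃ b, b ∉ (P.neighborSet (v₀, (0:Fin (N+2))) ∪ {(v₀, (0:Fin (N+2)))}) := by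
      by_contra h
      push_neg at h
      have h1 : (Set.univ : Set (α × Fin (N+2))) ⊆ _ := fun z _ => h z
      have h2 := Set.ncard_le_ncard h1 (Set.toFinite _)
      rw [Set.ncard_univ, hcardP] at h2
      have h3 := Set.ncard_union_le (P.neighborSet (v₀, (0:Fin (N+2)))) {(v₀, (0:Fin (N+2)))}
      rw [hnb, Set.ncard_singleton] at h3
      nlinarith
    have ha : (v₀, (0:Fin (N+2))) ∈ (P.neighborSet (v₀, (0:Fin (N+2))))ᶜ := by
      simp only [Set.mem_compl_iff, mem_neighborSet]
      exact P.irrefl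
    have hb' : b ∈ (P.neighborSet (v₀, (0:Fin (N+2))))ᶜ := fun hbS => hb (Or.inl hbS)
    have hkey : ∀ (c c' : ↥(P.neighborSet (v₀, (0:Fin (N+2))))ᶜ)
        (p : (P.induce (P.neighborSet (v₀, (0:Fin (N+2))))ᶜ).Walk c c'),
        c = ⟨_, ha⟩ → c' = ⟨_, ha⟩ := by
      intro c c' p
      induction p with
      | nil => exact id
      | @cons u w _ h q ih =>
        intro hu
        exfalso
        subst hu
        exact w.2 h
    obtain ⟨p⟩ := hconn.preconnected ⟨_, ha⟩ ⟨b, hb'⟩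
    have := hkey _ _ p rfl
    apply hb
    right
    rw [show b = ((⟨b, hb'⟩ : ↥(P.neighborSet (v₀, (0:Fin (N+2))))ᶜ) : α × Fin (N+2)) from rfl, this]
    rfl
  have hvPle : P.vConn ≤ 2*δ := by
    have h := vconn_le_of_cut P _ hPcut
    rwa [hPdeg, hv₀] at h
  -- take a minimum vertex cut S
  intro S hS
  have hScut : P.IsVertexCut S := hS.1
  have hs2δ : S.ncard ≤ 2*δ := by rw [hS.2]; exact hvPle
  have hSc : Sᶜ.Nonempty := by
    rw [Set.nonempty_compl]
    intro h
    rw [h, Set.ncard_univ, hcardP] at hs2δ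
    nlinarith
  haveI hQne : Nonempty ↥Sᶜ := hSc.to_subtype
  have hnp : ¬ (P.induce Sᶜ).Preconnected := by
    intro h
    exact hScut ⟨h⟩
  rw [SimpleGraph.Preconnected] at hnp
  push_neg at hnp
  obtain ⟨x, y, hxy⟩ := hnp
  set Q := P.induce Sᶜ with hQ
  set C : Set (α × Fin (N+2)) := {p | ∃ h : p ∈ Sᶜ, Q.Reachable x ⟨p, h⟩} with hC
  set D : Set (α × Fin (N+2)) := Sᶜ \ C with hD
  have hCS : C ⊆ Sᶜ := by
    rintro p ⟨hp, _⟩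
    exact hp
  have hDS : D ⊆ Sᶜ := fun p hp => hp.1
  have hxC : x.val ∈ C := ⟨x.2, Reachable.refl x⟩
  have hyD : y.val ∈ D := by
    refine ⟨y.2, ?_⟩
    rintro ⟨h, hr⟩
    exact hxy hr
  have hCcl : ∀ p ∈ C, ∀ q, P.Adj p q → q ∉ S → q ∈ C := by
    rintro p ⟨hp, hr⟩ q hadj hq
    exact ⟨hq, hr.trans (Adj.reachable hadj)⟩
  have hDcl : ∀ p ∈ D, ∀ q, P.Adj p q → q ∉ S → q ∈ D := by
    rintro p ⟨hp, hpC⟩ q hadj hq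
    exact ⟨hq, fun hqC => hpC (hCcl q hqC p (P.adj_symm hadj) hp)⟩
  have hCne : C.Nonempty := ⟨x.val, hxC⟩
  have hDne : D.Nonempty := ⟨y.val, hyD⟩
  -- layers
  set L : Fin (N+2) → Set (α × Fin (N+2)) := fun i => {p | p.2 = i} with hL
  set s : Fin (N+2) → ℕ := fun i => (S ∩ L i).ncard with hs
  have hsum : ∑ i, s i = S.ncard := by
    rw [Set.ncard_eq_toFinset_card' S,
      Finset.card_eq_sum_card_fiberwise (f := Prod.snd)
        (t := (Finset.univ : Finset (Fin (N+2)))) (fun z _ => Finset.mem_univ _)]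
    apply Finset.sum_congr rfl
    intro i _
    show (S ∩ L i).ncard = _
    rw [Set.ncard_eq_toFinset_card']
    congr 1
    ext p
    simp [hL, and_comm]
  have hbandcard : ∀ i, (S ∩ (L i ∪ L (i+1))).ncard = s i + s (i+1) := by
    intro i
    rw [Set.inter_union_distrib_left, Set.ncard_union_eq ?_ (Set.toFinite _) (Set.toFinite _)]
    rw [Set.disjoint_left]
    rintro p ⟨_, hp1⟩ ⟨_, hp2⟩
    rw [hL] at hp1 hp2
    exact hii1 i (hp1.symm.trans hp2)
  have hsum2 : ∑ i : Fin (N+2), (s i + s (i+1)) = 2 * S.ncard := by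
    rw [Finset.sum_add_distrib]
    have hegen : ∀ t : Fin (N+2) → ℕ, ∑ i : Fin (N+2), t (i+1) = ∑ i : Fin (N+2), t i :=
      fun t => Fintype.sum_equiv (Equiv.addRight (1 : Fin (N+2))) (fun i => t (i+1)) t
        (fun i => rfl)
    have he := hegen s
    rw [he, hsum]
    ring
  -- a vertex isolated by S gives the conclusion
  have finish : ∀ p : α × Fin (N+2), p ∉ S → P.neighborSet p ⊆ S →
      ∃ v, (P.neighborSet v).ncard = P.minDeg ∧ S = P.neighborSet v := by
    rintro ⟨w, j⟩ hpS hsub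
    have h1 : (P.neighborSet (w,j)).ncard ≤ S.ncard :=
      Set.ncard_le_ncard hsub (Set.toFinite _)
    have h2 : 2*δ ≤ (P.neighborSet (w,j)).ncard := by
      rw [hPdeg]
      exact Nat.mul_le_mul_left 2 (hδle w)
    have hEq : S = P.neighborSet (w,j) :=
      (Set.eq_of_subset_of_ncard_le hsub (by omega) (Set.toFinite _)).symm
    exact ⟨(w,j), by rw [hPmin]; omega, hEq⟩
  -- mixed band forces at least vConn B vertices of S in the band
  have hband : ∀ i : Fin (N+2),
      (C ∩ (L i ∪ L (i+1))).Nonempty → (D ∩ (L i ∪ L (i+1))).Nonempty →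
      B.vConn ≤ s i + s (i+1) := by
    intro i hCb hDb
    set ψ : α × Fin 2 → α × Fin (N+2) := fun p => (p.1, if p.2 = 0 then i else i + 1) with hψ
    have hψinj : Function.Injective ψ := by
      rintro ⟨a, ea⟩ ⟨b, eb⟩ h
      rw [hψ, Prod.ext_iff] at h
      obtain ⟨h1, h2⟩ := h
      simp only at h1 h2
      have hfin2 : ∀ e : Fin 2, e = 0 ∨ e = 1 := by decide
      have heq : ea = eb := by
        by_cases ha : ea = 0 <;> by_cases hb : eb = 0
        · rw [ha, hb]
        · rw [if_pos ha, if_neg hb] at h2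
          exact absurd h2 (hii1 i)
        · rw [if_neg ha, if_pos hb] at h2
          exact absurd h2.symm (hii1 i)
        · rw [(hfin2 ea).resolve_left ha, (hfin2 eb).resolve_left hb]
      rw [Prod.ext_iff]
      exact ⟨h1, heq⟩
    have hψmem : ∀ p : α × Fin 2, (ψ p).2 = i ∨ (ψ p).2 = i + 1 := by
      rintro ⟨a, ea⟩
      by_cases h : ea = 0 <;> simp [hψ, h]
    have hψim : ψ '' (ψ ⁻¹' S) = S ∩ (L i ∪ L (i+1)) := by
      ext q
      constructor
      · rintro ⟨p, hp, rfl⟩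
        exact ⟨hp, by rcases hψmem p with h | h <;> [exact Or.inl h; exact Or.inr h]⟩
      · rintro ⟨hqS, hq2⟩
        rcases hq2 with h | h
        · exact ⟨(q.1, 0), by
            simpa [hψ, show ((q.1, i) : α × Fin (N+2)) = q from Prod.ext rfl h.symm] using hqS, by
            simp [hψ]; exact Prod.ext rfl h.symm⟩
        · exact ⟨(q.1, 1), by
            simpa [hψ, show ((q.1, i+1) : α × Fin (N+2)) = q from Prod.ext rfl h.symm] using hqS,
            by simp [hψ]; exact Prod.ext rfl h.symm⟩
    have hTcard : (ψ ⁻¹' S).ncard = s i + s (i+1) := by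
      rw [← hbandcard i, ← hψim, Set.ncard_image_of_injective _ hψinj]
    have hTcut : B.IsVertexCut (ψ ⁻¹' S) := by
      intro hconn
      obtain ⟨c, hcC, hcb⟩ := hCb
      obtain ⟨d, hdD, hdb⟩ := hDb
      have hc' : ψ (c.1, if c.2 = i then (0:Fin 2) else 1) = c := by
        rcases hcb with h' | h'
        · have h : c.2 = i := h'
          have h0 : ψ (c.1, (0:Fin 2)) = (c.1, i) := by simp [hψ]
          rw [if_pos h, h0]
          exact Prod.ext rfl h.symm
        · have h : c.2 = i + 1 := h'
          have hne : c.2 ≠ i := by rw [h]; exact (hii1 i).symm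
          have h1 : ψ (c.1, (1:Fin 2)) = (c.1, i+1) := by simp [hψ]
          rw [if_neg hne, h1]
          exact Prod.ext rfl h.symm
      have hd' : ψ (d.1, if d.2 = i then (0:Fin 2) else 1) = d := by
        rcases hdb with h' | h'
        · have h : d.2 = i := h'
          have h0 : ψ (d.1, (0:Fin 2)) = (d.1, i) := by simp [hψ]
          rw [if_pos h, h0]
          exact Prod.ext rfl h.symm
        · have h : d.2 = i + 1 := h'
          have hne : d.2 ≠ i := by rw [h]; exact (hii1 i).symm
          have h1 : ψ (d.1, (1:Fin 2)) = (d.1, i+1) := by simp [hψ]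
          rw [if_neg hne, h1]
          exact Prod.ext rfl h.symm
      have hcT : (c.1, if c.2 = i then (0:Fin 2) else 1) ∈ (ψ ⁻¹' S)ᶜ := by
        intro hmem
        rw [Set.mem_preimage, hc'] at hmem
        exact hCS hcC hmem
      have hdT : (d.1, if d.2 = i then (0:Fin 2) else 1) ∈ (ψ ⁻¹' S)ᶜ := by
        intro hmem
        rw [Set.mem_preimage, hd'] at hmem
        exact hDS hdD hmem
      have hF : ∀ (p q : ↥(ψ ⁻¹' S)ᶜ), (B.induce (ψ ⁻¹' S)ᶜ).Adj p q →
          Q.Adj ⟨ψ p.val, p.2⟩ ⟨ψ q.val, q.2⟩ := by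
        rintro ⟨⟨a, ea⟩, ha⟩ ⟨⟨b, eb⟩, hb⟩ hadj
        have hBadj : G.Adj a b ∧ ea ≠ eb := hadj
        show P.Adj (ψ (a, ea)) (ψ (b, eb))
        rw [hPadj]
        refine ⟨hBadj.1, ?_⟩
        rw [hψ]
        fin_cases ea <;> fin_cases eb <;> simp only [reduceIte]
        · exact absurd rfl hBadj.2
        · exact Or.inl rfl
        · exact Or.inr rfl
        · exact absurd rfl hBadj.2
      let F : B.induce (ψ ⁻¹' S)ᶜ →g Q :=
        ⟨fun p => ⟨ψ p.val, p.2⟩, fun {p q} h => hF p q h⟩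
      have hreach := Reachable.map F (hconn.preconnected ⟨_, hcT⟩ ⟨_, hdT⟩)
      have hceq : (⟨ψ (c.1, if c.2 = i then (0:Fin 2) else 1), hcT⟩ : ↥Sᶜ) = ⟨c, hCS hcC⟩ :=
        Subtype.ext hc'
      have hdeq : (⟨ψ (d.1, if d.2 = i then (0:Fin 2) else 1), hdT⟩ : ↥Sᶜ) = ⟨d, hDS hdD⟩ :=
        Subtype.ext hd'
      rw [show F ⟨_, hcT⟩ = ⟨ψ (c.1, if c.2 = i then (0:Fin 2) else 1), hcT⟩ from rfl,
        show F ⟨_, hdT⟩ = ⟨ψ (d.1, if d.2 = i then (0:Fin 2) else 1), hdT⟩ from rfl,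
        hceq, hdeq] at hreach
      obtain ⟨hcmem, hcr⟩ := hcC
      apply hdD.2
      exact ⟨hDS hdD, hcr.trans hreach⟩
    apply Nat.sInf_le
    exact ⟨ψ ⁻¹' S, hTcard, Or.inl hTcut⟩
  -- dichotomy
  by_cases hall : ∀ i : Fin (N+2),
      (C ∩ (L i ∪ L (i+1))).Nonempty ∧ (D ∩ (L i ∪ L (i+1))).Nonempty
  · exfalso
    have hge : (N+2) * B.vConn ≤ ∑ i : Fin (N+2), (s i + s (i+1)) := by
      calc (N+2) * B.vConn = ∑ _i : Fin (N+2), B.vConn := by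
            rw [Finset.sum_const, Finset.card_univ, Fintype.card_fin]; ring
        _ ≤ _ := Finset.sum_le_sum (fun i _ => hband i (hall i).1 (hall i).2)
    rw [hsum2] at hge
    omega
  push_neg at hall
  obtain ⟨i₁, hi₁⟩ := hall
  -- side analysis: a side missing two consecutive layers yields the conclusion
  have hside : ∀ E : Set (α × Fin (N+2)), E.Nonempty → E ⊆ Sᶜ →
      (∀ p ∈ E, ∀ q, P.Adj p q → q ∉ S → q ∈ E) →
      ¬ (E ∩ (L i₁ ∪ L (i₁+1))).Nonempty →
      ∃ v, (P.neighborSet v).ncard = P.minDeg ∧ S = P.neighborSet v := by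
    intro E hEne hES hEcl hEband
    rw [Set.not_nonempty_iff_eq_empty] at hEband
    have hE0 : ∀ u : α, (u, i₁) ∉ E := fun u hu =>
      Set.eq_empty_iff_forall_notMem.1 hEband (u, i₁) ⟨hu, Or.inl rfl⟩
    have hE1 : ∀ u : α, (u, i₁+1) ∉ E := fun u hu =>
      Set.eq_empty_iff_forall_notMem.1 hEband (u, i₁+1) ⟨hu, Or.inr rfl⟩
    set T : Finset (Fin (N+2)) :=
      Finset.univ.filter (fun t => ∃ u : α, (u, i₁ + 1 + t) ∈ E) with hT
    have hmemT : ∀ t : Fin (N+2), t ∈ T ↔ ∃ u : α, (u, i₁ + 1 + t) ∈ E := by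
      intro t
      rw [hT, Finset.mem_filter]
      exact ⟨fun h => h.2, fun h => ⟨Finset.mem_univ _, h⟩⟩
    have hTne : T.Nonempty := by
      obtain ⟨p, hp⟩ := hEne
      refine ⟨p.2 - (i₁ + 1), (hmemT _).2 ⟨p.1, ?_⟩⟩
      rw [show i₁ + 1 + (p.2 - (i₁+1)) = p.2 by ring]
      exact hp
    set ta := T.min' hTne with hta
    set tb := T.max' hTne with htb
    have htaT : ta ∈ T := T.min'_mem hTne
    have htbT : tb ∈ T := T.max'_mem hTne
    have h0T : (0 : Fin (N+2)) ∉ T := by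
      rw [hmemT]
      rintro ⟨u, hu⟩
      rw [show i₁ + 1 + (0:Fin (N+2)) = i₁ + 1 by ring] at hu
      exact hE1 u hu
    have hlneg : (Fin.last (N+1) : Fin (N+2)) = -1 := by
      rw [Fin.ext_iff]
      simp [Fin.coe_neg_one, Fin.val_last]
    have hlastT : (Fin.last (N+1)) ∉ T := by
      rw [hmemT, hlneg]
      rintro ⟨u, hu⟩
      rw [show i₁ + 1 + (-1 : Fin (N+2)) = i₁ by ring] at hu
      exact hE0 u hu
    have hta0 : ta ≠ 0 := fun h => h0T (h ▸ htaT)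
    have htblast : tb ≠ Fin.last (N+1) := fun h => hlastT (h ▸ htbT)
    have hsub1 : (ta - 1).val = ta.val - 1 := by rw [Fin.coe_sub_one, if_neg hta0]
    have hadd1 : (tb + 1).val = tb.val + 1 := by rw [Fin.val_add_one, if_neg htblast]
    have htale : ta.val ≤ tb.val := T.min'_le tb htbT
    have hta1 : 1 ≤ ta.val := by
      rcases Nat.eq_zero_or_pos ta.val with h | h
      · exact absurd (Fin.ext h : ta = 0) hta0
      · exact h
    have htam : ta - 1 ∉ T := by
      intro h
      have h2 := T.min'_le _ h
      rw [← hta, Fin.le_def, hsub1] at h2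
      omega
    have htbm : tb + 1 ∉ T := by
      intro h
      have h2 := T.le_max' _ h
      rw [← htb, Fin.le_def, hadd1] at h2
      omega
    set ℓa := i₁ + 1 + ta with hℓa
    set ℓb := i₁ + 1 + tb with hℓb
    have hnoE : ∀ t : Fin (N+2), t ∉ T → ∀ u, (u, i₁ + 1 + t) ∉ E :=
      fun t ht u hu => ht ((hmemT t).2 ⟨u, hu⟩)
    obtain ⟨u, hu⟩ : ∃ u, (u, ℓa) ∈ E := (hmemT ta).1 htaT
    have hNa : ∀ y ∈ G.neighborSet u, (y, ℓa - 1) ∈ S := by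
      intro y hy
      by_contra hns
      have hadj : P.Adj (u, ℓa) (y, ℓa - 1) := by
        rw [hPadj]
        exact ⟨hy, Or.inr (by ring)⟩
      have hmem := hEcl _ hu _ hadj hns
      rw [show ℓa - 1 = i₁ + 1 + (ta - 1) by rw [hℓa]; ring] at hmem
      exact hnoE _ htam y hmem
    have himA : (fun y => (y, ℓa - 1)) '' G.neighborSet u ⊆ S ∩ L (ℓa - 1) := by
      rintro q ⟨z, hz, rfl⟩
      exact ⟨hNa z hz, rfl⟩
    have hinj2 : ∀ c : Fin (N+2), Function.Injective (fun y : α => (y, c)) :=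
      fun c a b h => congrArg Prod.fst h
    have hδsa : δ ≤ s (ℓa - 1) := by
      calc δ ≤ (G.neighborSet u).ncard := hδle u
        _ = ((fun y => (y, ℓa - 1)) '' G.neighborSet u).ncard :=
            (Set.ncard_image_of_injective _ (hinj2 _)).symm
        _ ≤ (S ∩ L (ℓa-1)).ncard := Set.ncard_le_ncard himA (Set.toFinite _)
    by_cases hab : ta = tb
    · -- single occupied layer: isolated vertex of P − S
      have hNb : ∀ y ∈ G.neighborSet u, (y, ℓa + 1) ∈ S := by
        intro y hy
        by_contra hns
        have hadj : P.Adj (u, ℓa) (y, ℓa + 1) := by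
          rw [hPadj]
          exact ⟨hy, Or.inl rfl⟩
        have hmem := hEcl _ hu _ hadj hns
        rw [show ℓa + 1 = i₁ + 1 + (ta + 1) by rw [hℓa]; ring, hab] at hmem
        exact hnoE _ htbm y hmem
      apply finish (u, ℓa) (hES hu)
      rw [hPnbr]
      rintro q (⟨z, hz, rfl⟩ | ⟨z, hz, rfl⟩)
      · exact hNb z hz
      · exact hNa z hz
    · -- two distinct boundary layers: contradiction
      exfalso
      have htatb : ta.val < tb.val := lt_of_le_of_ne htale (fun h => hab (Fin.ext h))
      obtain ⟨u', hu'⟩ : ∃ u', (u', ℓb) ∈ E := (hmemT tb).1 htbT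
      have hNb' : ∀ y ∈ G.neighborSet u', (y, ℓb + 1) ∈ S := by
        intro y hy
        by_contra hns
        have hadj : P.Adj (u', ℓb) (y, ℓb + 1) := by
          rw [hPadj]
          exact ⟨hy, Or.inl rfl⟩
        have hmem := hEcl _ hu' _ hadj hns
        rw [show ℓb + 1 = i₁ + 1 + (tb + 1) by rw [hℓb]; ring] at hmem
        exact hnoE _ htbm y hmem
      have himB : (fun y => (y, ℓb + 1)) '' G.neighborSet u' ⊆ S ∩ L (ℓb + 1) := by
        rintro q ⟨z, hz, rfl⟩
        exact ⟨hNb' z hz, rfl⟩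
      have hδsb : δ ≤ s (ℓb + 1) := by
        calc δ ≤ (G.neighborSet u').ncard := hδle u'
          _ = ((fun y => (y, ℓb + 1)) '' G.neighborSet u').ncard :=
              (Set.ncard_image_of_injective _ (hinj2 _)).symm
          _ ≤ (S ∩ L (ℓb+1)).ncard := Set.ncard_le_ncard himB (Set.toFinite _)
      have hne1 : ℓa - 1 ≠ ℓb + 1 := by
        intro h
        have h2 : ta - 1 = tb + 1 := by linear_combination h
        have h3 := congrArg Fin.val h2
        rw [hsub1, hadd1] at h3
        omega
      have htwo : s (ℓa-1) + s (ℓb+1) ≤ S.ncard := by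
        have hsubS : (S ∩ L (ℓa-1)) ∪ (S ∩ L (ℓb+1)) ⊆ S := by
          rintro q (⟨h1, _⟩ | ⟨h1, _⟩) <;> exact h1
        have hdisj : Disjoint (S ∩ L (ℓa-1)) (S ∩ L (ℓb+1)) := by
          rw [Set.disjoint_left]
          rintro q ⟨_, hq1⟩ ⟨_, hq2⟩
          exact hne1 ((hq1 : q.2 = _).symm.trans hq2)
        calc s (ℓa-1) + s (ℓb+1) = ((S ∩ L (ℓa-1)) ∪ (S ∩ L (ℓb+1))).ncard :=
              (Set.ncard_union_eq hdisj (Set.toFinite _) (Set.toFinite _)).symm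
          _ ≤ S.ncard := Set.ncard_le_ncard hsubS (Set.toFinite _)
      have hsa : s (ℓa - 1) = δ := by omega
      have hszero : ∀ j : Fin (N+2), j ≠ ℓa-1 → j ≠ ℓb+1 → S ∩ L j = ∅ := by
        intro j hj1 hj2
        have hdisj : Disjoint (S ∩ L (ℓa-1)) (S ∩ L (ℓb+1)) := by
          rw [Set.disjoint_left]
          rintro q ⟨_, hq1⟩ ⟨_, hq2⟩
          exact hne1 ((hq1 : q.2 = _).symm.trans hq2)
        have hdisj2 : Disjoint (S ∩ L j) ((S ∩ L (ℓa-1)) ∪ (S ∩ L (ℓb+1))) := by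
          rw [Set.disjoint_left]
          rintro q ⟨_, hq1⟩ (⟨_, hq2⟩ | ⟨_, hq2⟩)
          · exact hj1 ((hq1 : q.2 = _).symm.trans hq2)
          · exact hj2 ((hq1 : q.2 = _).symm.trans hq2)
        have hsub3 : (S ∩ L j) ∪ ((S ∩ L (ℓa-1)) ∪ (S ∩ L (ℓb+1))) ⊆ S := by
          rintro q (⟨h1, _⟩ | (⟨h1, _⟩ | ⟨h1, _⟩)) <;> exact h1
        have h3 : s j + (s (ℓa-1) + s (ℓb+1)) ≤ S.ncard := by
          rw [← Set.ncard_union_eq hdisj (Set.toFinite _) (Set.toFinite _),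
            ← Set.ncard_union_eq hdisj2 (Set.toFinite _) (Set.toFinite _)]
          exact Set.ncard_le_ncard hsub3 (Set.toFinite _)
        have h4 : s j = 0 := by omega
        exact (Set.ncard_eq_zero (Set.toFinite _)).1 h4
      have hexact : S ∩ L (ℓa-1) = (fun y => (y, ℓa-1)) '' G.neighborSet u := by
        symm
        apply Set.eq_of_subset_of_ncard_le himA ?_ (Set.toFinite _)
        rw [Set.ncard_image_of_injective _ (hinj2 _)]
        calc (S ∩ L (ℓa-1)).ncard = δ := hsa
          _ ≤ (G.neighborSet u).ncard := hδle u
      have hfa : ℓa ≠ ℓa - 1 := fun h => h1ne (by linear_combination h)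
      have hfb : ℓa ≠ ℓb + 1 := by
        intro h
        have h2 : ta = tb + 1 := by linear_combination h
        have h3 := congrArg Fin.val h2
        rw [hadd1] at h3
        omega
      have hga : ℓa + 1 ≠ ℓa - 1 := hpm ℓa
      have hgb : ℓa + 1 ≠ ℓb + 1 := by
        intro h
        exact hab (by linear_combination h)
      have hfreeS : ∀ (q : α × Fin (N+2)), (q.2 = ℓa ∨ q.2 = ℓa + 1) → q ∉ S := by
        rintro q (h | h) hq
        · exact Set.eq_empty_iff_forall_notMem.1 (hszero _ hfa hfb) q ⟨hq, h⟩
        · exact Set.eq_empty_iff_forall_notMem.1 (hszero _ hga hgb) q ⟨hq, h⟩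
      have hbounce : ∀ (vv ww : α) (p : G.Walk vv ww) (l : Fin (N+2)),
          (l = ℓa ∨ l = ℓa + 1) → (vv, l) ∈ E →
          (ww, if Even p.length then l else ℓa + ℓa + 1 - l) ∈ E := by
        intro vv ww p
        induction p with
        | nil =>
          intro l hl hv
          simpa using hv
        | @cons a b c hadj q ih =>
          intro l hl hv
          have hfl : (ℓa + ℓa + 1 - l = ℓa + 1 ∧ l = ℓa) ∨
              (ℓa + ℓa + 1 - l = ℓa ∧ l = ℓa + 1) := by
            rcases hl with h | h
            · exact Or.inl ⟨by rw [h]; ring, h⟩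
            · exact Or.inr ⟨by rw [h]; ring, h⟩
          have hstep : (b, ℓa + ℓa + 1 - l) ∈ E := by
            apply hEcl _ hv _ ?_ ?_
            · rw [hPadj]
              refine ⟨hadj, ?_⟩
              rcases hfl with ⟨h1, h2⟩ | ⟨h1, h2⟩
              · rw [h1, h2]
                exact Or.inl rfl
              · rw [h1, h2]
                exact Or.inr rfl
            · apply hfreeS
              rcases hfl with ⟨h1, _⟩ | ⟨h1, _⟩
              · exact Or.inr h1
              · exact Or.inl h1
          have hl' : (ℓa + ℓa + 1 - l = ℓa ∨ ℓa + ℓa + 1 - l = ℓa + 1) := by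
            rcases hfl with ⟨h1, _⟩ | ⟨h1, _⟩
            · exact Or.inr h1
            · exact Or.inl h1
          have hrec := ih _ hl' hstep
          have hflfl : ℓa + ℓa + 1 - (ℓa + ℓa + 1 - l) = l := by ring
          rcases Nat.even_or_odd q.length with hq | hq
          · rw [if_pos hq] at hrec
            rw [Walk.length_cons, if_neg (by simp [Nat.even_add_one, hq])]
            exact hrec
          · rw [if_neg (Nat.not_even_iff_odd.2 hq), hflfl] at hrec
            rw [Walk.length_cons,
              if_pos (by simp [Nat.even_add_one, Nat.not_even_iff_odd.2 hq])]
            exact hrec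
      have hallE : ∀ w : α, (w, ℓa) ∈ E := by
        intro w
        obtain ⟨p, hp⟩ := even_walk G hGc hGb u w
        have hres := hbounce u w p ℓa (Or.inl rfl) hu
        rwa [if_pos hp] at hres
      obtain ⟨z, hz⟩ := hnbr u
      have hzE := hallE z
      have hzu : (u, ℓa - 1) ∈ S := by
        by_contra hns
        have hadj : P.Adj (z, ℓa) (u, ℓa - 1) := by
          rw [hPadj]
          exact ⟨G.adj_symm hz, Or.inr (by ring)⟩
        have hmem := hEcl _ hzE _ hadj hns
        rw [show ℓa - 1 = i₁ + 1 + (ta - 1) by rw [hℓa]; ring] at hmem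
        exact hnoE _ htam u hmem
      have hmem2 : (u, ℓa - 1) ∈ (fun y => (y, ℓa-1)) '' G.neighborSet u := by
        rw [← hexact]
        exact ⟨hzu, rfl⟩
      obtain ⟨z', hz', hz'eq⟩ := hmem2
      have hz'u : z' = u := congrArg Prod.fst hz'eq
      rw [hz'u] at hz'
      exact G.irrefl hz'
  by_cases hc : (C ∩ (L i₁ ∪ L (i₁+1))).Nonempty
  · exact hside D hDne hDS hDcl (by rw [Set.not_nonempty_iff_eq_empty]; exact hi₁ hc)
  · exact hside C hCne hCS hCcl hc
end

section
/- If H is the direct product of k ≥ 1 odd cycles, then κ(H × K_2) = 2^k. -/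
open SimpleGraph

universe u v

variable {α : Type u} {β : Type v}

open Finset Pointwise
set_option linter.unusedSectionVars false

variable {A : Type*} [AddCommGroup A] [DecidableEq A] [Fintype A]

/-- boundary of `C` in the Cayley graph with connection set `T` -/
def cayBd (T C : Finset A) : Finset A := (C + T) \ C

/-- closed neighbourhood -/
def cayCl (T C : Finset A) : Finset A := C ∪ (C + T)

/-- admissible set: nonempty with nonempty "outside" -/
def cayAdm (T C : Finset A) : Prop := C.Nonempty ∧ ((cayCl T C)ᶜ : Finset A).Nonempty

variable {T : Finset A}

lemma cayCl_eq (C : Finset A) : cayCl T C = C ∪ cayBd T C := by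
  rw [cayCl, cayBd, union_sdiff_self_eq_union]

lemma card_cayCl (C : Finset A) : (cayCl T C).card = C.card + (cayBd T C).card := by
  rw [cayCl_eq, cayBd, card_union_of_disjoint disjoint_sdiff]

lemma cayCl_mono {C D : Finset A} (h : C ⊆ D) : cayCl T C ⊆ cayCl T D :=
  union_subset_union h (add_subset_add_right h)

lemma subset_cayCl (C : Finset A) : C ⊆ cayCl T C := subset_union_left

lemma cayCl_union (C D : Finset A) : cayCl T (C ∪ D) = cayCl T C ∪ cayCl T D := by
  unfold cayCl
  rw [union_add]
  ext a
  simp only [mem_union]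
  tauto

lemma cay_submod (C D : Finset A) :
    (cayBd T (C ∩ D)).card + (cayBd T (C ∪ D)).card ≤ (cayBd T C).card + (cayBd T D).card := by
  have h1 : (cayCl T (C ∩ D)).card + (cayCl T (C ∪ D)).card
      ≤ (cayCl T C).card + (cayCl T D).card := by
    calc (cayCl T (C ∩ D)).card + (cayCl T (C ∪ D)).card
        ≤ (cayCl T C ∩ cayCl T D).card + (cayCl T C ∪ cayCl T D).card := by
          rw [cayCl_union]
          exact Nat.add_le_add_right (card_le_card (subset_inter
            (cayCl_mono inter_subset_left) (cayCl_mono inter_subset_right))) _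
      _ = _ := card_inter_add_card_union _ _
  have h2 := card_inter_add_card_union C D
  have e1 := card_cayCl (T := T) (C ∩ D)
  have e2 := card_cayCl (T := T) (C ∪ D)
  have e3 := card_cayCl (T := T) C
  have e4 := card_cayCl (T := T) D
  omega

lemma cayBd_star_subset (hsym : ∀ t ∈ T, -t ∈ T) (C : Finset A) :
    cayBd T ((cayCl T C)ᶜ) ⊆ cayBd T C := by
  intro a ha
  rw [cayBd, mem_sdiff] at ha
  obtain ⟨haT, haN⟩ := ha
  rw [mem_add] at haT
  obtain ⟨s, hs, t, ht, rfl⟩ := haT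
  rw [mem_compl, not_not] at haN
  have hsC : s ∉ cayCl T C := mem_compl.mp hs
  have hnotC : s + t ∉ C := by
    intro hC
    exact hsC (mem_union_right _ (mem_add.mpr ⟨s + t, hC, -t, hsym t ht, by abel⟩))
  rw [cayCl, mem_union] at haN
  rcases haN with h | h
  · exact absurd h hnotC
  · exact mem_sdiff.mpr ⟨h, hnotC⟩

lemma subset_compl_cayCl_star (hsym : ∀ t ∈ T, -t ∈ T) (C : Finset A) :
    C ⊆ (cayCl T ((cayCl T C)ᶜ))ᶜ := by
  intro x hx
  rw [mem_compl, cayCl, mem_union]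
  rintro (h | h)
  · exact (mem_compl.mp h) (subset_cayCl C hx)
  · rw [mem_add] at h
    obtain ⟨s, hs, t, ht, hst⟩ := h
    apply mem_compl.mp hs
    exact mem_union_right _ (mem_add.mpr ⟨x, hx, -t, hsym t ht, by rw [← hst]; abel⟩)

lemma mem_add_singleton' {C : Finset A} {g a : A} : a ∈ C + {g} ↔ a - g ∈ C := by
  rw [mem_add]
  constructor
  · rintro ⟨y, hy, z, hz, rfl⟩
    rw [mem_singleton] at hz
    subst hz
    simpa using hy
  · intro h
    exact ⟨a - g, h, g, mem_singleton_self g, by abel⟩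

lemma cayBd_translate (C : Finset A) (g : A) : cayBd T (C + {g}) = cayBd T C + {g} := by
  have h : (C + {g}) + T = (C + T) + {g} := add_right_comm _ _ _
  unfold cayBd
  rw [h]
  ext a
  simp only [mem_sdiff, mem_add_singleton']

lemma cayCl_translate (C : Finset A) (g : A) : cayCl T (C + {g}) = cayCl T C + {g} := by
  have h : (C + {g}) + T = (C + T) + {g} := add_right_comm _ _ _
  unfold cayCl
  rw [h]
  ext a
  simp only [mem_union, mem_add_singleton']

lemma compl_translate (C : Finset A) (g : A) : (C + {g})ᶜ = Cᶜ + {g} := by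
  ext a
  simp only [mem_compl, mem_add_singleton']

lemma cayAdm_translate {C : Finset A} (g : A) (h : cayAdm T C) : cayAdm T (C + {g}) := by
  obtain ⟨⟨c, hc⟩, ⟨d, hd⟩⟩ := h
  constructor
  · exact ⟨c + g, mem_add_singleton'.mpr (by simpa using hc)⟩
  · exact ⟨d + g, by
      rw [cayCl_translate, compl_translate, mem_add_singleton']
      simpa using hd⟩

theorem cay_lower_bound (hsym : ∀ t ∈ T, -t ∈ T) {m : ℕ}
    (hsub : ∀ Q : Finset A, (0 : A) ∈ Q → (∀ a ∈ Q, ∀ b ∈ Q, a - b ∈ Q) →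
      cayAdm T Q → m ≤ (cayBd T Q).card) :
    ∀ C : Finset A, cayAdm T C → m ≤ (cayBd T C).card := by
  intro C hC
  set P : Set ℕ := {n | ∃ D : Finset A, cayAdm T D ∧ (cayBd T D).card = n} with hP
  have hPne : P.Nonempty := ⟨_, C, hC, rfl⟩
  set κ := sInf P with hκ
  have hκle : ∀ D : Finset A, cayAdm T D → κ ≤ (cayBd T D).card :=
    fun D hD => Nat.sInf_le ⟨D, hD, rfl⟩
  suffices hmκ : m ≤ κ by exact le_trans hmκ (hκle C hC)
  obtain ⟨F0, hF0adm, hF0κ⟩ : ∃ D : Finset A, cayAdm T D ∧ (cayBd T D).card = κ :=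
    Nat.sInf_mem hPne
  -- fragments
  set Frag : Finset A → Prop := fun D => cayAdm T D ∧ (cayBd T D).card = κ with hFrag
  -- star of a fragment is a fragment
  have star_frag : ∀ F : Finset A, Frag F → Frag ((cayCl T F)ᶜ) := by
    rintro F ⟨⟨hFne, hFsne⟩, hFκ⟩
    have h1 : cayAdm T ((cayCl T F)ᶜ) := by
      refine ⟨hFsne, ?_⟩
      obtain ⟨c, hc⟩ := hFne
      exact ⟨c, (subset_compl_cayCl_star hsym F) hc⟩
    refine ⟨h1, le_antisymm ?_ (hκle _ h1)⟩
    rw [← hFκ]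
    exact card_le_card (cayBd_star_subset hsym F)
  set Ps : Set ℕ := {n | ∃ D : Finset A, Frag D ∧ D.card = n} with hPs
  have hPsne : Ps.Nonempty := ⟨F0.card, F0, ⟨hF0adm, hF0κ⟩, rfl⟩
  -- the key (uncrossing) lemma
  have key : ∀ Q F : Finset A, Frag Q → Q.card = sInf Ps → Frag F →
      (Q ∩ F).Nonempty → Q ⊆ F := by
    intro Q F hQ hQmin hF hQF
    by_contra hns
    have hRssQ : Q ∩ F ⊂ Q :=
      ⟨inter_subset_left, fun h => hns (fun x hx => (mem_inter.mp (h hx)).2)⟩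
    have hRcard : (Q ∩ F).card < Q.card := card_lt_card hRssQ
    have hadmR : cayAdm T (Q ∩ F) := by
      refine ⟨hQF, ?_⟩
      obtain ⟨d, hd⟩ := hQ.1.2
      exact ⟨d, mem_compl.mpr (fun hmem =>
        mem_compl.mp hd (cayCl_mono inter_subset_left hmem))⟩
    have hRκ : κ ≤ (cayBd T (Q ∩ F)).card := hκle _ hadmR
    have hsubm := cay_submod (T := T) Q F
    rw [hQ.2, hF.2] at hsubm
    by_cases hstar : ((cayCl T (Q ∪ F))ᶜ : Finset A).Nonempty
    · have hadmU : cayAdm T (Q ∪ F) := ⟨hQ.1.1.mono subset_union_left, hstar⟩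
      have hUκ : κ ≤ (cayBd T (Q ∪ F)).card := hκle _ hadmU
      have hRfrag : Frag (Q ∩ F) := ⟨hadmR, by omega⟩
      have : sInf Ps ≤ (Q ∩ F).card := Nat.sInf_le ⟨Q ∩ F, hRfrag, rfl⟩
      omega
    · have huniv : cayCl T (Q ∪ F) = Finset.univ := by
        rw [← compl_eq_empty_iff]
        exact not_nonempty_iff_eq_empty.mp hstar
      have hcard1 : Fintype.card A = (Q ∪ F).card + (cayBd T (Q ∪ F)).card := by
        rw [← card_cayCl, huniv, card_univ]
      have hcard2 : (Q ∪ F).card + (Q ∩ F).card = Q.card + F.card :=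
        (card_inter_add_card_union Q F).symm ▸ (by omega)
      have hcard3 : (cayCl T F).card + ((cayCl T F)ᶜ).card = Fintype.card A :=
        card_add_card_compl _
      have hcard4 : (cayCl T F).card = F.card + κ := by rw [card_cayCl, hF.2]
      have hQle : Q.card ≤ ((cayCl T F)ᶜ).card := by
        rw [hQmin]
        exact Nat.sInf_le ⟨_, star_frag F hF, rfl⟩
      have hRpos : 0 < (Q ∩ F).card := card_pos.mpr hQF
      have hUb : (cayBd T (Q ∪ F)).card ≤ κ := by omega
      omega
  -- get an atom
  obtain ⟨Q1, hQ1frag, hQ1card⟩ : ∃ D : Finset A, Frag D ∧ D.card = sInf Ps :=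
    Nat.sInf_mem hPsne
  obtain ⟨q0, hq0⟩ := hQ1frag.1.1
  set Q0 := Q1 + ({-q0} : Finset A) with hQ0
  have transAtom : ∀ (D : Finset A) (g : A), Frag D → Frag (D + {g}) := by
    rintro D g ⟨hadm, hbd⟩
    refine ⟨cayAdm_translate g hadm, ?_⟩
    rw [cayBd_translate, card_add_singleton, hbd]
  have hQ0frag : Frag Q0 := transAtom _ _ hQ1frag
  have hQ0card : Q0.card = sInf Ps := by rw [hQ0, card_add_singleton, hQ1card]
  have h0Q0 : (0 : A) ∈ Q0 := by
    rw [hQ0, mem_add_singleton']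
    simpa using hq0
  have hsubQ0 : ∀ a ∈ Q0, ∀ b ∈ Q0, a - b ∈ Q0 := by
    intro a ha b hb
    have hfrag' : Frag (Q0 + {-b}) := transAtom _ _ hQ0frag
    have hcard' : (Q0 + {-b}).card = sInf Ps := by rw [card_add_singleton, hQ0card]
    have h0' : (0 : A) ∈ Q0 + {-b} := by
      rw [mem_add_singleton']
      simpa using hb
    have hint : (Q0 ∩ (Q0 + {-b})).Nonempty := ⟨0, mem_inter.mpr ⟨h0Q0, h0'⟩⟩
    have heq : Q0 + {-b} = Q0 := subset_antisymm
      (key _ _ hfrag' hcard' hQ0frag (by rwa [inter_comm] at hint))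
      (key _ _ hQ0frag hQ0card hfrag' hint)
    rw [← heq, mem_add_singleton']
    simpa using ha
  calc m ≤ (cayBd T Q0).card := hsub Q0 h0Q0 hsubQ0 hQ0frag.1
    _ = κ := hQ0frag.2

theorem cay_subgroup_bound (ε : A →+ Fin 2) (hε : ∀ t ∈ T, ε t = 1)
    (Q : Finset A) (h0 : (0 : A) ∈ Q) (hQsub : ∀ a ∈ Q, ∀ b ∈ Q, a - b ∈ Q)
    (hnT : ¬ T ⊆ Q) : T.card ≤ (cayBd T Q).card := by
  classical
  have hneg : ∀ a ∈ Q, -a ∈ Q := fun a ha => by simpa using hQsub 0 h0 a ha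
  have hadd : ∀ a ∈ Q, ∀ b ∈ Q, a + b ∈ Q := fun a ha b hb => by
    simpa [sub_neg_eq_add] using hQsub a ha (-b) (hneg b hb)
  obtain ⟨s0, hs0T, hs0Q⟩ : ∃ s ∈ T, s ∉ Q := by
    by_contra hcon
    push_neg at hcon
    exact hnT hcon
  have hTsub : T \ Q ⊆ cayBd T Q := by
    intro t ht
    rw [mem_sdiff] at ht
    exact mem_sdiff.mpr ⟨mem_add.mpr ⟨0, h0, t, ht.1, zero_add t⟩, ht.2⟩
  by_cases ht0 : ∃ t ∈ T, t ∈ Q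
  · obtain ⟨t0, ht0T, ht0Q⟩ := ht0
    have hεt0 : ε t0 = 1 := hε t0 ht0T
    set Q0 := Q.filter (fun a => ε a = 0) with hQ0def
    set Q1 := Q.filter (fun a => ¬ (ε a = 0)) with hQ1def
    have hsplit : Q0.card + Q1.card = Q.card := card_filter_add_card_filter_not _
    have h01 : Q0.card ≤ Q1.card := by
      apply card_le_card_of_injOn (fun a => a + t0)
      · intro a ha
        rw [Finset.mem_coe] at ha ⊢
        rw [hQ0def, mem_filter] at ha
        rw [hQ1def, mem_filter]
        refine ⟨hadd a ha.1 t0 ht0Q, ?_⟩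
        rw [map_add, ha.2, hεt0]
        decide
      · intro a _ b _ hab
        exact add_right_cancel hab
    set Cs := Q + ({s0} : Finset A) with hCs
    have hCssub : Cs ⊆ Q + T := add_subset_add_left (singleton_subset_iff.mpr hs0T)
    have hCsQ : ∀ a ∈ Cs, a ∉ Q := by
      intro a ha haQ
      rw [hCs, mem_add_singleton'] at ha
      have := hQsub a haQ (a - s0) ha
      simp only [sub_sub_cancel] at this
      exact hs0Q this
    have hCscard : Cs.card = Q.card := card_add_singleton _ _
    have hCsT : (Cs ∩ T).card ≤ Q0.card := by
      apply card_le_card_of_injOn (fun a => a - s0)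
      · intro a ha
        rw [Finset.mem_coe] at ha ⊢
        rw [mem_inter, hCs, mem_add_singleton'] at ha
        rw [hQ0def, mem_filter]
        refine ⟨ha.1, ?_⟩
        rw [map_sub, hε a ha.2, hε s0 hs0T]
        decide
      · intro a _ b _ hab
        exact sub_left_injective hab
    have hTQ : (T ∩ Q).card ≤ Q0.card := by
      apply card_le_card_of_injOn (fun a => a - t0)
      · intro a ha
        rw [Finset.mem_coe] at ha ⊢
        rw [mem_inter] at ha
        rw [hQ0def, mem_filter]
        refine ⟨hQsub a ha.2 t0 ht0Q, ?_⟩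
        rw [map_sub, hε a ha.1, hεt0]
        decide
      · intro a _ b _ hab
        exact sub_left_injective hab
    have hsubset : (T \ Q) ∪ (Cs \ T) ⊆ cayBd T Q := by
      apply union_subset hTsub
      intro a ha
      rw [mem_sdiff] at ha
      exact mem_sdiff.mpr ⟨hCssub ha.1, hCsQ a ha.1⟩
    have hdisj : Disjoint (T \ Q) (Cs \ T) := by
      rw [Finset.disjoint_left]
      intro a ha hb
      exact (mem_sdiff.mp hb).2 (mem_sdiff.mp ha).1
    have hcardu : (T \ Q).card + (Cs \ T).card ≤ (cayBd T Q).card := by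
      rw [← card_union_of_disjoint hdisj]
      exact card_le_card hsubset
    have e1 : (T \ Q).card + (T ∩ Q).card = T.card := card_sdiff_add_card_inter T Q
    have e2 : (Cs \ T).card + (Cs ∩ T).card = Cs.card := card_sdiff_add_card_inter Cs T
    omega
  · push_neg at ht0
    have : T ⊆ cayBd T Q := by
      intro t ht
      exact hTsub (mem_sdiff.mpr ⟨ht, ht0 t ht⟩)
    exact card_le_card this

section Concrete
open Fin.CommRing
variable {k : ℕ} (l : Fin k → ℕ) [inst : ∀ i, NeZero (l i)]

abbrev Vtx := ((i : Fin k) → Fin (l i)) × Fin 2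

def Tconc : Finset (Vtx l) :=
  Finset.image (fun σ : Fin k → Bool => ((fun i => if σ i then 1 else -1), 1)) Finset.univ

lemma one_ne_neg_one {n : ℕ} [NeZero n] (h : 3 ≤ n) : (1 : Fin n) ≠ -1 := by
  intro h1
  have h2 : (1 : Fin n) + 1 = 0 := eq_neg_iff_add_eq_zero.mp h1
  have h3 := congrArg Fin.val h2
  rw [Fin.val_add, Fin.val_one', Fin.val_zero] at h3
  rw [Nat.mod_eq_of_lt (show 1 < n by omega)] at h3
  rw [Nat.mod_eq_of_lt (show 1 + 1 < n by omega)] at h3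
  omega

lemma mem_Tconc (hl : ∀ i, 3 ≤ l i) (x : Vtx l) :
    x ∈ Tconc l ↔ (∀ i, x.1 i = 1 ∨ x.1 i = -1) ∧ x.2 = 1 := by
  constructor
  · intro hx
    obtain ⟨σ, -, rfl⟩ := Finset.mem_image.mp hx
    refine ⟨fun i => ?_, rfl⟩
    by_cases h : σ i <;> simp [h]
  · rintro ⟨h1, h2⟩
    refine Finset.mem_image.mpr ⟨fun i => decide (x.1 i = 1), Finset.mem_univ _, ?_⟩
    obtain ⟨f, e⟩ := x
    simp only at h1 h2 ⊢
    rw [Prod.mk.injEq]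
    refine ⟨funext fun i => ?_, h2.symm⟩
    rcases h1 i with h | h
    · simp [h]
    · have := one_ne_neg_one (hl i)
      simp [h]
      exact fun hh => hh.symm

lemma Tconc_card (hl : ∀ i, 3 ≤ l i) : (Tconc l).card = 2 ^ k := by
  rw [Tconc, Finset.card_image_of_injective _ ?_, Finset.card_univ]
  · simp [Fintype.card_fun]
  · intro σ τ h
    rw [Prod.mk.injEq] at h
    funext i
    by_contra hne
    have := congrFun h.1 i
    have hne11 := one_ne_neg_one (hl i)
    rcases Bool.eq_false_or_eq_true (σ i) with h1 | h1 <;>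
        rcases Bool.eq_false_or_eq_true (τ i) with h2 | h2 <;>
        rw [h1, h2] at hne this <;> simp only [if_true, if_false] at this <;> first
      | exact hne rfl
      | exact hne11 this
      | exact hne11 this.symm

lemma Tconc_symm (hl : ∀ i, 3 ≤ l i) : ∀ t ∈ Tconc l, -t ∈ Tconc l := by
  intro t ht
  rw [mem_Tconc l hl] at ht ⊢
  refine ⟨fun i => ?_, ?_⟩
  · have : (-t).1 i = -(t.1 i) := rfl
    rw [this]
    rcases ht.1 i with h | h
    · right; rw [h]
    · left; rw [h, neg_neg]
  · have : (-t).2 = -(t.2) := rfl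
    rw [this, ht.2]
    decide

lemma cycle_adj_iff {n : ℕ} [NeZero n] (h : 3 ≤ n) (u v : Fin n) :
    (SimpleGraph.cycleGraph n).Adj u v ↔ (v - u = 1 ∨ v - u = -1) := by
  rw [SimpleGraph.cycleGraph_adj']
  have hval : ∀ w : Fin n, w.val = 1 ↔ w = 1 := by
    intro w
    rw [Fin.ext_iff, Fin.val_one', Nat.mod_eq_of_lt (by omega)]
  have hneg : u - v = -(v - u) := by abel
  rw [hval, hval, hneg, neg_eq_iff_eq_neg]
  exact or_comm

lemma adj_iff (hk : 1 ≤ k) (hl : ∀ i, 3 ≤ l i) (x y : Vtx l) :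
    ((SimpleGraph.piTensorProd fun i => SimpleGraph.cycleGraph (l i)).tensorProd
      (⊤ : SimpleGraph (Fin 2))).Adj x y ↔ y - x ∈ Tconc l := by
  rw [mem_Tconc l hl]
  constructor
  · rintro ⟨⟨-, hcyc⟩, hsnd⟩
    constructor
    · intro i
      have := (cycle_adj_iff (hl i) _ _).mp (hcyc i)
      exact this
    · have hne : x.2 ≠ y.2 := hsnd.ne
      have he : (y - x).2 = y.2 - x.2 := rfl
      rw [he]
      have hd : ∀ a b : Fin 2, a ≠ b → b - a = 1 := by decide
      exact hd _ _ hne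
  · rintro ⟨h1, h2⟩
    have hadj : ∀ i, (SimpleGraph.cycleGraph (l i)).Adj (x.1 i) (y.1 i) := by
      intro i
      rw [cycle_adj_iff (hl i)]
      exact h1 i
    refine ⟨⟨?_, hadj⟩, ?_⟩
    · intro heq
      have := (hadj ⟨0, hk⟩).ne
      exact this (congrFun heq ⟨0, hk⟩)
    · rw [SimpleGraph.top_adj]
      have h2' : y.2 - x.2 = 1 := h2
      have hd : ∀ a b : Fin 2, b - a = 1 → a ≠ b := by decide
      exact hd _ _ h2' 

lemma T_gen (hodd : ∀ i, Odd (l i)) (hl : ∀ i, 3 ≤ l i)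
    (Q : Finset (Vtx l)) (h0 : (0 : Vtx l) ∈ Q)
    (hQsub : ∀ a ∈ Q, ∀ b ∈ Q, a - b ∈ Q) (hT : Tconc l ⊆ Q) :
    ∀ x : Vtx l, x ∈ Q := by
  have hneg : ∀ a ∈ Q, -a ∈ Q := fun a ha => by simpa using hQsub 0 h0 a ha
  have hadd : ∀ a ∈ Q, ∀ b ∈ Q, a + b ∈ Q := fun a ha b hb => by
    simpa [sub_neg_eq_add] using hQsub a ha (-b) (hneg b hb)
  have hsmul : ∀ (n : ℕ) (a : Vtx l), a ∈ Q → n • a ∈ Q := by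
    intro n a ha
    induction n with
    | zero => simpa using h0
    | succ n ih => rw [succ_nsmul]; exact hadd _ ih _ ha
  have hsum : ∀ (s : Finset (Fin k)) (f : Fin k → Vtx l),
      (∀ i ∈ s, f i ∈ Q) → (∑ i ∈ s, f i) ∈ Q := by
    intro s f hf
    classical
    induction s using Finset.induction_on with
    | empty => simpa using h0
    | insert _ _ hx ih =>
      rw [Finset.sum_insert hx]
      exact hadd _ (hf _ (Finset.mem_insert_self _ _)) _
        (ih (fun i hi => hf i (Finset.mem_insert_of_mem hi)))
  have hu : ∀ σ : Fin k → Bool, (((fun i => if σ i then 1 else -1), 1) : Vtx l) ∈ Q :=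
    fun σ => hT (Finset.mem_image.mpr ⟨σ, Finset.mem_univ _, rfl⟩)
  have hd : ∀ i : Fin k, ((Pi.single i (2 : Fin (l i)), 0) : Vtx l) ∈ Q := by
    intro i
    have h3 := hQsub _ (hu (fun _ => true)) _ (hu (fun j => !(decide (j = i))))
    have heq : (((fun _ => if true then 1 else -1), 1) : Vtx l)
        - ((fun j => if !(decide (j = i)) then 1 else -1), 1)
        = ((Pi.single i (2 : Fin (l i)), 0) : Vtx l) := by
      rw [Prod.mk_sub_mk, Prod.mk.injEq]
      constructor
      · funext j
        rw [Pi.sub_apply]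
        by_cases hji : j = i
        · subst hji
          rw [Pi.single_eq_same]
          have hb : (!(decide (j = j))) = false := by simp
          rw [if_pos rfl, hb, if_neg (by simp : ¬ (false = true))]
          ring
        · rw [Pi.single_eq_of_ne hji]
          have hb : (!(decide (j = i))) = true := by simp [hji]
          rw [if_pos rfl, if_pos hb, sub_self]
      · show (1 : Fin 2) - 1 = 0
        ring
    rwa [heq] at h3
  have he : ∀ i : Fin k, ((Pi.single i (1 : Fin (l i)), 0) : Vtx l) ∈ Q := by
    intro i
    obtain ⟨c, hc⟩ := hodd i
    have hs := hsmul (c + 1) _ (hd i)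
    have heq : (c + 1) • ((Pi.single i (2 : Fin (l i)), 0) : Vtx l)
        = ((Pi.single i (1 : Fin (l i)), 0) : Vtx l) := by
      rw [Prod.smul_mk, Prod.mk.injEq]
      constructor
      · rw [← Pi.single_smul]
        have harith : (c + 1) * 2 = l i + 1 := by omega
        have hval : (c + 1) • (2 : Fin (l i)) = 1 :=
          calc (c + 1) • (2 : Fin (l i)) = (((c + 1) * 2 : ℕ) : Fin (l i)) := by
                push_cast
                ring
            _ = ((l i + 1 : ℕ) : Fin (l i)) := by rw [harith]
            _ = 1 := by rw [Nat.cast_add, Fin.natCast_self, zero_add, Nat.cast_one]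
        rw [hval]
      · rw [smul_zero]
    rwa [heq] at hs
  have hones : (∑ i, ((Pi.single i (1 : Fin (l i)), 0) : Vtx l)).1
      = (fun _ => 1 : (i : Fin k) → Fin (l i)) := by
    rw [Prod.fst_sum]
    exact Finset.univ_sum_single (fun i => (1 : Fin (l i)))
  have hz : ((0, 1) : Vtx l) ∈ Q := by
    have hs := hsum Finset.univ (fun i => ((Pi.single i (1 : Fin (l i)), 0) : Vtx l))
      (fun i _ => he i)
    have h3 := hQsub _ (hu (fun _ => true)) _ hs
    have heq : (((fun _ => if true then 1 else -1), 1) : Vtx l)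
        - (∑ i, ((Pi.single i (1 : Fin (l i)), 0) : Vtx l)) = ((0, 1) : Vtx l) := by
      rw [Prod.ext_iff]
      refine ⟨?_, ?_⟩
      · show (fun _ => if true then 1 else -1 : (i : Fin k) → Fin (l i))
            - (∑ i, ((Pi.single i (1 : Fin (l i)), 0) : Vtx l)).1 = 0
        rw [hones]
        funext j
        rw [Pi.sub_apply]
        show (if true then 1 else -1) - (1 : Fin (l j)) = 0
        simp
      · show (1 : Fin 2) - (∑ i, ((Pi.single i (1 : Fin (l i)), 0) : Vtx l)).2 = 1
        rw [Prod.snd_sum]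
        simp
    rwa [heq] at h3
  intro x
  have h1 := hsum Finset.univ (fun i => (x.1 i).val • ((Pi.single i (1 : Fin (l i)), 0) : Vtx l))
    (fun i _ => hsmul _ _ (he i))
  have h2 := hadd _ h1 _ (hsmul (x.2).val _ hz)
  have hterm : ∀ i : Fin k, (x.1 i).val • ((Pi.single i (1 : Fin (l i)), 0) : Vtx l)
      = ((Pi.single i (x.1 i) : (j : Fin k) → Fin (l j)), 0) := by
    intro i
    rw [Prod.smul_mk, Prod.mk.injEq]
    refine ⟨?_, smul_zero _⟩
    rw [← Pi.single_smul]
    have hval : (x.1 i).val • (1 : Fin (l i)) = x.1 i := by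
      rw [nsmul_eq_mul, mul_one, Fin.cast_val_eq_self]
    rw [hval]
  have heq : (∑ i, (x.1 i).val • ((Pi.single i (1 : Fin (l i)), 0) : Vtx l))
      + (x.2).val • ((0, 1) : Vtx l) = x := by
    rw [Finset.sum_congr rfl (fun i _ => hterm i)]
    rw [Prod.ext_iff]
    constructor
    · rw [Prod.fst_add, Prod.fst_sum, Prod.smul_fst]
      show (∑ i, (Pi.single i (x.1 i) : (j : Fin k) → Fin (l j)))
          + (x.2).val • (0 : (i : Fin k) → Fin (l i)) = x.1
      rw [smul_zero, add_zero]
      exact Finset.univ_sum_single x.1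
    · rw [Prod.snd_add, Prod.snd_sum, Prod.smul_snd]
      show (∑ _i : Fin k, (0 : Fin 2)) + (x.2).val • (1 : Fin 2) = x.2
      rw [nsmul_eq_mul, mul_one, Fin.cast_val_eq_self]
      simp
  rwa [heq] at h2


theorem conc_bound (hodd : ∀ i, Odd (l i)) (hl : ∀ i, 3 ≤ l i) :
    ∀ C : Finset (Vtx l), cayAdm (Tconc l) C → 2 ^ k ≤ (cayBd (Tconc l) C).card := by
  apply cay_lower_bound (Tconc_symm l hl)
  intro Q h0 hQsub hadm
  by_cases hTQ : Tconc l ⊆ Q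
  · exfalso
    obtain ⟨a, ha⟩ := hadm.2
    exact (Finset.mem_compl.mp ha) (subset_cayCl _ (T_gen l hodd hl Q h0 hQsub hTQ a))
  · rw [← Tconc_card l hl]
    exact cay_subgroup_bound (AddMonoidHom.snd _ _)
      (fun t ht => ((mem_Tconc l hl t).mp ht).2) Q h0 hQsub hTQ

end Concrete

/-- If H is the direct product of k ≥ 1 odd cycles, then κ(H × K₂) = 2^k. -/
theorem stmt_15 (k : ℕ) (hk : 1 ≤ k) (l : Fin k → ℕ)
    (hodd : ∀ i, Odd (l i)) (hl : ∀ i, 3 ≤ l i) :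
    ((SimpleGraph.piTensorProd fun i => cycleGraph (l i)).tensorProd
      (⊤ : SimpleGraph (Fin 2))).vConn = 2 ^ k := by
  classical
  haveI : ∀ i, NeZero (l i) := fun i => ⟨by have := hl i; omega⟩
  set G := ((SimpleGraph.piTensorProd fun i => SimpleGraph.cycleGraph (l i)).tensorProd
      (⊤ : SimpleGraph (Fin 2))) with hG
  have hadj : ∀ x y : Vtx l, G.Adj x y ↔ y - x ∈ Tconc l := adj_iff l hk hl
  have h2k : 2 ≤ 2 ^ k := by
    calc 2 = 2 ^ 1 := rfl
      _ ≤ 2 ^ k := Nat.pow_le_pow_right (by norm_num) hk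
  have hmem : (2:ℕ) ^ k ∈ {n | ∃ S : Set (Vtx l), S.ncard = n ∧
      (G.IsVertexCut S ∨ Nat.card (Vtx l) ≤ n + 1)} := by
    refine ⟨(G.neighborSet 0 : Set (Vtx l)), ?_, Or.inl ?_⟩
    · have hset : G.neighborSet 0 = ((Tconc l : Finset (Vtx l)) : Set (Vtx l)) := by
        ext x
        rw [SimpleGraph.mem_neighborSet, hadj 0 x, sub_zero]
        simp
      rw [hset, Set.ncard_coe_finset, Tconc_card l hl]
    · intro hconn
      set z : Vtx l := (0, 1) with hz
      have h0c : (0 : Vtx l) ∈ (G.neighborSet 0 : Set (Vtx l))ᶜ := by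
        intro hmem0
        exact G.irrefl hmem0
      have hzc : z ∈ (G.neighborSet 0 : Set (Vtx l))ᶜ := by
        intro hmemz
        have hthis : G.Adj 0 z := hmemz
        rw [hadj 0 z, sub_zero, mem_Tconc l hl] at hthis
        have h01 := hthis.1 ⟨0, hk⟩
        have h30 := hl ⟨0, hk⟩
        have hzi : z.1 ⟨0, hk⟩ = 0 := rfl
        rw [hzi] at h01
        have h10 : (0 : Fin (l ⟨0, hk⟩)) ≠ 1 := by
          intro hx
          have hv := congrArg Fin.val hx
          rw [Fin.val_zero, Fin.val_one', Nat.mod_eq_of_lt (by omega)] at hv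
          omega
        rcases h01 with h | h
        · exact h10 h
        · have hv := congrArg Neg.neg h
          rw [neg_zero, neg_neg] at hv
          exact h10 hv
      have hstep : ∀ (a b : ↥((G.neighborSet 0 : Set (Vtx l))ᶜ))
          (_p : (G.induce ((G.neighborSet 0 : Set (Vtx l))ᶜ)).Walk a b), a ≠ b →
          ∃ x, (G.induce ((G.neighborSet 0 : Set (Vtx l))ᶜ)).Adj a x := by
        intro a b p hab
        cases p with
        | nil => exact absurd rfl hab
        | cons h q => exact ⟨_, h⟩
      obtain ⟨p⟩ := hconn.preconnected ⟨0, h0c⟩ ⟨z, hzc⟩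
      have hne0z : (⟨0, h0c⟩ : ↥((G.neighborSet 0 : Set (Vtx l))ᶜ)) ≠ ⟨z, hzc⟩ := by
        intro hx
        have h0z : (0 : Vtx l) = z := Subtype.mk_eq_mk.mp hx
        have h2 : (0 : Fin 2) = 1 := congrArg Prod.snd h0z
        exact absurd h2 (by decide)
      obtain ⟨x, hx⟩ := hstep _ _ p hne0z
      have hb : G.Adj 0 (x : Vtx l) := hx
      exact x.2 hb
  apply le_antisymm
  · exact Nat.sInf_le hmem
  · apply le_csInf ⟨_, hmem⟩
    rintro n ⟨S, hScard, hS⟩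
    by_contra hn
    push_neg at hn
    have hcard : Fintype.card (Vtx l) = (∏ i, l i) * 2 := by
      rw [Fintype.card_prod, Fintype.card_pi]
      simp
    have hprod : 3 ^ k ≤ ∏ i, l i := by
      calc (3:ℕ) ^ k = ∏ _i : Fin k, 3 := by
            rw [Finset.prod_const, Finset.card_univ, Fintype.card_fin]
        _ ≤ ∏ i, l i := Finset.prod_le_prod' (fun i _ => hl i)
    have hpow : 2 ^ k ≤ 3 ^ k := Nat.pow_le_pow_left (by norm_num) k
    have hmul1 : 3 ^ k * 2 ≤ (∏ i, l i) * 2 := Nat.mul_le_mul_right _ hprod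
    have hbig : 2 ^ k + 2 ≤ Fintype.card (Vtx l) := by omega
    rcases hS with hcut | hclose
    swap
    · rw [Nat.card_eq_fintype_card] at hclose
      omega
    rcases isEmpty_or_nonempty (↥(Sᶜ)) with hec | hnec
    · have hSc : Sᶜ = (∅ : Set (Vtx l)) := by
        rw [Set.eq_empty_iff_forall_notMem]
        intro x hx
        exact hec.false ⟨x, hx⟩
      have hSuniv : S = Set.univ := by
        rw [← compl_compl S, hSc, Set.compl_empty]
      rw [hSuniv, Set.ncard_univ, Nat.card_eq_fintype_card] at hScard
      omega
    · have hcut' : ¬ (G.induce Sᶜ).Connected := hcut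
      haveI := hnec
      have hnpre : ¬ (G.induce Sᶜ).Preconnected := by
        intro hpre
        exact hcut' (SimpleGraph.Connected.mk hpre)
      rw [SimpleGraph.Preconnected] at hnpre
      push_neg at hnpre
      obtain ⟨u, w, huw⟩ := hnpre
      set Cset : Set (Vtx l) := {x | ∃ hx : x ∈ Sᶜ, (G.induce Sᶜ).Reachable u ⟨x, hx⟩}
        with hCset
      set CF : Finset (Vtx l) := (Set.toFinite Cset).toFinset with hCF
      have hmemCF : ∀ x : Vtx l, x ∈ CF ↔
          ∃ hx : x ∈ Sᶜ, (G.induce Sᶜ).Reachable u ⟨x, hx⟩ := by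
        intro x
        rw [hCF, Set.Finite.mem_toFinset]
        rfl
      have huCF : (u : Vtx l) ∈ CF := by
        rw [hmemCF]
        exact ⟨u.2, by rw [Subtype.coe_eta]⟩
      -- boundary of CF is inside S
      have hbdS : cayBd (Tconc l) CF ⊆ (Set.toFinite S).toFinset := by
        intro a ha
        rw [cayBd, Finset.mem_sdiff] at ha
        obtain ⟨haT, haC⟩ := ha
        rw [Finset.mem_add] at haT
        obtain ⟨c, hc, t, ht, rfl⟩ := haT
        rw [Set.Finite.mem_toFinset]
        by_contra haS
        have hacomp : c + t ∈ Sᶜ := haS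
        obtain ⟨hcS, hcr⟩ := (hmemCF c).mp hc
        have hadj2 : G.Adj c (c + t) := by
          rw [hadj, add_sub_cancel_left]
          exact ht
        have hreach : (G.induce Sᶜ).Reachable u ⟨c + t, hacomp⟩ :=
          hcr.trans (SimpleGraph.Adj.reachable (by exact hadj2))
        exact haC ((hmemCF (c + t)).mpr ⟨hacomp, hreach⟩)
      -- w is outside the closed neighbourhood
      have hwout : (w : Vtx l) ∈ (cayCl (Tconc l) CF)ᶜ := by
        rw [Finset.mem_compl, cayCl, Finset.mem_union]
        rintro (hw | hw)
        · obtain ⟨hwS, hwr⟩ := (hmemCF w).mp hw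
          apply huw
          have : (⟨(w : Vtx l), hwS⟩ : ↥(Sᶜ)) = w := Subtype.coe_eta _ _
          rwa [this] at hwr
        · rw [Finset.mem_add] at hw
          obtain ⟨c, hc, t, ht, hct⟩ := hw
          obtain ⟨hcS, hcr⟩ := (hmemCF c).mp hc
          have hadj2 : G.Adj c (c + t) := by
            rw [hadj, add_sub_cancel_left]
            exact ht
          rw [hct] at hadj2
          have hreach : (G.induce Sᶜ).Reachable u ⟨(w : Vtx l), w.2⟩ :=
            hcr.trans (SimpleGraph.Adj.reachable (by exact hadj2))
          apply huw
          have : (⟨(w : Vtx l), w.2⟩ : ↥(Sᶜ)) = w := Subtype.coe_eta _ _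
          rwa [this] at hreach
      have hadm : cayAdm (Tconc l) CF := ⟨⟨_, huCF⟩, ⟨_, hwout⟩⟩
      have hlow := conc_bound l hodd hl CF hadm
      have hup : (cayBd (Tconc l) CF).card ≤ n := by
        calc (cayBd (Tconc l) CF).card ≤ (Set.toFinite S).toFinset.card :=
              Finset.card_le_card hbdS
          _ = S.ncard := (Set.ncard_eq_toFinset_card S (Set.toFinite S)).symm
          _ = n := hScard
      omega
end
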